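/- arXiv:2303.07037 — 16 statements merged into one kernel-verified Lean document; each statement's English description precedes it below -/
import Mathlib

section
/- The set of all ∇-points of a Banach space X is a closed subset of X. -/
open scoped ENNReal

variable {X : Type*} [NormedAddCommGroup X] [NormedSpace ℝ X]

/-- The ballSlice of the closed unit ball of `X` determined by the functional `f` and `α`:
`S(f, α) = {y ∈ B_X : f y > 1 - α}`. -/
def ballSlice (f : X →L[ℝ] ℝ) (α : ℝ) : Set X := {y | ‖y‖ ≤ 1 ∧ 1 - α < f y}

/-- `x` is a Daugavet point: `sup_{y ∈ S} ‖x - y‖ = 2` for every ballSlice `S` of `B_X`. -/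
def IsDaugavetPoint (x : X) : Prop :=
  ‖x‖ = 1 ∧ ∀ (f : X →L[ℝ] ℝ) (α : ℝ), ‖f‖ = 1 → 0 < α →
    ∀ ε > (0 : ℝ), ∃ y ∈ ballSlice f α, 2 - ε < ‖x - y‖

/-- `x` is a `∇`-point: `sup_{y ∈ S} ‖x - y‖ = 2` for every ballSlice `S` of `B_X`
not containing `x`. -/
def IsNablaPoint (x : X) : Prop :=
  ‖x‖ = 1 ∧ ∀ (f : X →L[ℝ] ℝ) (α : ℝ), ‖f‖ = 1 → 0 < α → x ∉ ballSlice f α →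
    ∀ ε > (0 : ℝ), ∃ y ∈ ballSlice f α, 2 - ε < ‖x - y‖

/-- `x` is a `𝔇`-point: `sup_{y ∈ S(f,α)} ‖x - y‖ = 2` for every norm-one functional `f`
supporting `x` (i.e. `f x = 1`) and every `α > 0`. -/
def IsDPoint (x : X) : Prop :=
  ‖x‖ = 1 ∧ ∀ (f : X →L[ℝ] ℝ) (α : ℝ), ‖f‖ = 1 → f x = 1 → 0 < α →
    ∀ ε > (0 : ℝ), ∃ y ∈ ballSlice f α, 2 - ε < ‖x - y‖

/-- `x` is a denting point of `B_X`: it belongs to slices of arbitrarily small diameter. -/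
def IsDentingPoint (x : X) : Prop :=
  ‖x‖ ≤ 1 ∧ ∀ ε > (0 : ℝ), ∃ (f : X →L[ℝ] ℝ) (α : ℝ), ‖f‖ = 1 ∧ 0 < α ∧
    x ∈ ballSlice f α ∧ ∀ y ∈ ballSlice f α, ∀ z ∈ ballSlice f α, ‖y - z‖ < ε

/-- `x` is a strongly exposed point of `B_X`: some norm-one functional `f` with `f x = 1`
generates slices containing `x` of arbitrarily small diameter. -/
def IsStronglyExposedPoint (x : X) : Prop :=
  ‖x‖ = 1 ∧ ∃ f : X →L[ℝ] ℝ, ‖f‖ = 1 ∧ f x = 1 ∧ ∀ ε > (0 : ℝ), ∃ α > (0 : ℝ),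
    ∀ y ∈ ballSlice f α, ∀ z ∈ ballSlice f α, ‖y - z‖ < ε


/-- The set of all `∇`-points of a Banach space `X` is a closed subset of `X`. -/
theorem isClosed_setOf_isNablaPoint
    {X : Type*} [NormedAddCommGroup X] [NormedSpace ℝ X] [CompleteSpace X] :
    IsClosed {x : X | IsNablaPoint x} := by
  apply isClosed_of_closure_subset
  intro x hx
  rw [Metric.mem_closure_iff] at hx
  have hnorm : ‖x‖ = 1 := by
    have h0 : |‖x‖ - 1| ≤ 0 := by
      apply le_of_forall_pos_le_add
      intro δ hδ
      obtain ⟨x', hx', hd⟩ := hx δ hδ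
      rw [dist_eq_norm] at hd
      have h1 : ‖x'‖ = 1 := hx'.1
      have := abs_norm_sub_norm_le x x'
      rw [h1] at this
      linarith
    have : ‖x‖ - 1 = 0 := by
      have := abs_nonneg (‖x‖ - 1)
      have habs : |‖x‖ - 1| = 0 := le_antisymm h0 this
      exact abs_eq_zero.mp habs
    linarith
  refine ⟨hnorm, ?_⟩
  intro f α hf hα hxs ε hε
  set δ : ℝ := min α (ε / 2) / 2 with hδdef
  have hδpos : 0 < δ := by positivity
  obtain ⟨x', hx', hd⟩ := hx δ hδpos
  rw [dist_eq_norm] at hd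
  have hδα : δ < α := by
    have : min α (ε / 2) ≤ α := min_le_left _ _
    simp only [hδdef]; linarith
  have hδε : δ ≤ ε / 4 := by
    have : min α (ε / 2) ≤ ε / 2 := min_le_right _ _
    simp only [hδdef]; linarith
  -- f x ≤ 1 - α since x ∉ slice and ‖x‖ ≤ 1
  have hfx : f x ≤ 1 - α := by
    by_contra h
    exact hxs ⟨le_of_eq hnorm, lt_of_not_ge h⟩
  -- f x' < 1 - (α - δ)
  have hfd : f x' - f x ≤ ‖x - x'‖ := by
    have h1 : ‖f (x' - x)‖ ≤ ‖f‖ * ‖x' - x‖ := f.le_opNorm _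
    rw [hf, one_mul, map_sub, Real.norm_eq_abs] at h1
    have h2 : f x' - f x ≤ |f x' - f x| := le_abs_self _
    rw [norm_sub_rev] at h1
    linarith
  have hfx' : f x' ≤ 1 - (α - δ) := by linarith
  have hx'notin : x' ∉ ballSlice f (α - δ) := by
    intro hmem
    exact absurd hmem.2 (not_lt.mpr hfx')
  obtain ⟨y, hy, hyd⟩ := hx'.2 f (α - δ) hf (by linarith) hx'notin (ε / 2) (by linarith)
  refine ⟨y, ⟨hy.1, by linarith [hy.2]⟩, ?_⟩
  have htri : ‖x' - y‖ ≤ ‖x' - x‖ + ‖x - y‖ := by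
    have := dist_triangle x' x y
    simpa [dist_eq_norm] using this
  have hxx : ‖x' - x‖ < δ := by rwa [norm_sub_rev] at hd
  linarith
end

section
/- If x is a ∇-point of the unit ball of a Banach space X, then either x is a Daugavet point or x is a strongly exposed point of B_X. -/
open scoped ENNReal

variable {X : Type*} [NormedAddCommGroup X] [NormedSpace ℝ X]

/-- A `∇`-point is either a Daugavet point or a strongly exposed point of the unit ball. -/
theorem IsNablaPoint.isDaugavetPoint_or_isStronglyExposedPoint
    {X : Type*} [NormedAddCommGroup X] [NormedSpace ℝ X] [CompleteSpace X]
    {x : X} (hx : IsNablaPoint x) :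
    IsDaugavetPoint x ∨ IsStronglyExposedPoint x := by
  obtain ⟨hx1, hx2⟩ := hx
  by_cases hD : IsDaugavetPoint x
  · exact Or.inl hD
  right
  have hD' : ¬ ∀ (f : X →L[ℝ] ℝ) (α : ℝ), ‖f‖ = 1 → 0 < α →
      ∀ ε > (0:ℝ), ∃ y ∈ ballSlice f α, 2 - ε < ‖x - y‖ := fun h => hD ⟨hx1, h⟩
  push_neg at hD'
  obtain ⟨f, α, hf, hα, ε₀, hε₀, hbound⟩ := hD'
  -- `f x = 1`
  have hfx_le : f x ≤ 1 := by
    calc f x ≤ ‖f x‖ := le_abs_self _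
    _ ≤ ‖f‖ * ‖x‖ := f.le_opNorm x
    _ = 1 := by rw [hf, hx1, one_mul]
  have hfx : f x = 1 := by
    by_contra h
    have hlt : f x < 1 := lt_of_le_of_ne hfx_le h
    have hβ : 0 < min α (1 - f x) := lt_min hα (by linarith)
    have hxnot : x ∉ ballSlice f (min α (1 - f x)) := by
      intro hmem
      have h1 : 1 - min α (1 - f x) < f x := hmem.2
      have h2 : min α (1 - f x) ≤ 1 - f x := min_le_right _ _
      linarith
    obtain ⟨y, ⟨hy1, hy2⟩, hy3⟩ := hx2 f _ hf hβ hxnot ε₀ hε₀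
    have hyα : y ∈ ballSlice f α :=
      ⟨hy1, by have := min_le_left α (1 - f x); linarith⟩
    have := hbound y hyα
    linarith
  -- points far from x have small `f`-value
  have hΔle : ∀ d : X, ‖d‖ ≤ 1 → 2 - ε₀ < ‖x - d‖ → f d ≤ 1 - α := by
    intro d hd1 hd2
    by_contra h
    push_neg at h
    have hmem : d ∈ ballSlice f α := ⟨hd1, h⟩
    have := hbound d hmem
    linarith
  set Δ : Set X := {d | ‖d‖ ≤ 1 ∧ 2 - ε₀ < ‖x - d‖} with hΔdef
  set E : Set X := closure (convexHull ℝ (insert x Δ)) with hEdef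
  have hxE : x ∈ E := subset_closure (subset_convexHull ℝ _ (Set.mem_insert _ _))
  -- the whole unit ball lies in `E`
  have hball : ∀ p : X, ‖p‖ ≤ 1 → p ∈ E := by
    intro p hp
    by_contra hpE
    obtain ⟨g, c, hgc, hcg⟩ := geometric_hahn_banach_closed_point
      ((convex_convexHull ℝ _).closure) isClosed_closure hpE
    have hgx : g x < c := hgc x hxE
    have hN : 0 < ‖g‖ := by
      rcases (norm_nonneg g).eq_or_lt with h | h
      · exfalso
        have hg0 : g = 0 := by
          have : ‖g‖ = 0 := h.symm
          exact norm_eq_zero.mp this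
        rw [hg0] at hgx hcg
        simp at hgx hcg
        linarith
      · exact h
    have hcN : c < ‖g‖ := by
      have h1 : g p ≤ ‖g‖ := by
        calc g p ≤ ‖g p‖ := le_abs_self _
        _ ≤ ‖g‖ * ‖p‖ := g.le_opNorm p
        _ ≤ ‖g‖ * 1 := by nlinarith [norm_nonneg g]
        _ = ‖g‖ := mul_one _
      linarith
    have hgnorm : ‖(‖g‖⁻¹ • g : X →L[ℝ] ℝ)‖ = 1 := by
      have h := norm_smul (‖g‖⁻¹) g
      rw [h, norm_inv, norm_norm, inv_mul_cancel₀ (ne_of_gt hN)]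
    have hβ : 0 < 1 - c / ‖g‖ := by
      have : c / ‖g‖ < 1 := (div_lt_one hN).mpr hcN
      linarith
    have hxslice : x ∉ ballSlice (‖g‖⁻¹ • g) (1 - c / ‖g‖) := by
      intro hmem
      have h1 : c / ‖g‖ < (‖g‖⁻¹ • g) x := by
        have := hmem.2; linarith
      have h2 : ((‖g‖⁻¹ • g : X →L[ℝ] ℝ)) x < c / ‖g‖ := by
        have heq : ((‖g‖⁻¹ • g : X →L[ℝ] ℝ)) x = ‖g‖⁻¹ * g x := rfl
        rw [heq, div_eq_inv_mul]
        exact (mul_lt_mul_iff_right₀ (inv_pos.mpr hN)).mpr hgx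
      linarith
    obtain ⟨y, ⟨hy1, hy2⟩, hy3⟩ := hx2 _ _ hgnorm hβ hxslice ε₀ hε₀
    have hyΔ : y ∈ Δ := ⟨hy1, hy3⟩
    have hyE : y ∈ E := subset_closure
      (subset_convexHull ℝ _ (Set.mem_insert_of_mem _ hyΔ))
    have hgy : g y < c := hgc y hyE
    have h2 : ((‖g‖⁻¹ • g : X →L[ℝ] ℝ)) y < c / ‖g‖ := by
      have heq : ((‖g‖⁻¹ • g : X →L[ℝ] ℝ)) y = ‖g‖⁻¹ * g y := rfl
      rw [heq, div_eq_inv_mul]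
      exact (mul_lt_mul_iff_right₀ (inv_pos.mpr hN)).mpr hgy
    have h1 : 1 - (1 - c/‖g‖) < ((‖g‖⁻¹ • g : X →L[ℝ] ℝ)) y := hy2
    linarith
  -- the sublevel set `K` of the convex function
  set K : Set X := {z : X | ‖z - x‖ + (2/α) * f z ≤ 2/α} with hKdef
  have hKconv : Convex ℝ K := by
    intro a ha b hb s t hs ht hst
    simp only [hKdef, Set.mem_setOf_eq] at ha hb ⊢
    have hx' : s • x + t • x = x := by rw [← add_smul, hst, one_smul]
    have heq : (s • a + t • b) - x = s • (a - x) + t • (b - x) := by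
      conv_lhs => rw [← hx']
      rw [smul_sub, smul_sub]
      abel
    have hnorm : ‖(s • a + t • b) - x‖ ≤ s * ‖a - x‖ + t * ‖b - x‖ := by
      rw [heq]
      calc ‖s • (a-x) + t • (b-x)‖ ≤ ‖s • (a-x)‖ + ‖t • (b-x)‖ := norm_add_le _ _
      _ = s * ‖a-x‖ + t * ‖b-x‖ := by
          rw [norm_smul, norm_smul, Real.norm_of_nonneg hs, Real.norm_of_nonneg ht]
    have hmap : f (s • a + t • b) = s * f a + t * f b := by
      simp [map_add, map_smul, smul_eq_mul]
    rw [hmap]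
    have h1 := mul_le_mul_of_nonneg_left ha hs
    have h2 := mul_le_mul_of_nonneg_left hb ht
    have hst2 : s * (2/α) + t * (2/α) = 2/α := by rw [← add_mul, hst, one_mul]
    nlinarith [hnorm]
  have hKclosed : IsClosed K := by
    have hcont : Continuous fun z : X => ‖z - x‖ + (2/α) * f z := by
      fun_prop
    exact isClosed_le hcont continuous_const
  have hsub : insert x Δ ⊆ K := by
    intro d hd
    rcases hd with rfl | hdΔ
    · simp only [hKdef, Set.mem_setOf_eq, sub_self, norm_zero, hfx, mul_one, zero_add, le_refl]
    · have hfd : f d ≤ 1 - α := hΔle d hdΔ.1 hdΔ.2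
      have hdx : ‖d - x‖ ≤ 2 := by
        calc ‖d - x‖ ≤ ‖d‖ + ‖x‖ := norm_sub_le _ _
        _ ≤ 2 := by rw [hx1]; linarith [hdΔ.1]
      have h2 : (2/α) * f d ≤ (2/α) * (1 - α) :=
        mul_le_mul_of_nonneg_left hfd (by positivity)
      have h3 : (2/α) * (1 - α) = 2/α - 2 := by
        field_simp
      simp only [hKdef, Set.mem_setOf_eq]
      linarith
  have hEK : E ⊆ K := by
    rw [hEdef]
    exact closure_minimal (convexHull_min hsub hKconv) hKclosed
  have hkey : ∀ y : X, ‖y‖ ≤ 1 → ‖y - x‖ + (2/α) * f y ≤ 2/α :=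
    fun y hy => hEK (hball y hy)
  -- conclude: `f` strongly exposes `x`
  refine ⟨hx1, f, hf, hfx, ?_⟩
  intro ε hε
  refine ⟨α * ε / 8, by positivity, ?_⟩
  intro y hy z hz
  have hy' := hkey y hy.1
  have hz' := hkey z hz.1
  have hy2 : (2/α) * (1 - f y) < (2/α) * (α*ε/8) :=
    mul_lt_mul_of_pos_left (by linarith [hy.2]) (by positivity)
  have hz2 : (2/α) * (1 - f z) < (2/α) * (α*ε/8) :=
    mul_lt_mul_of_pos_left (by linarith [hz.2]) (by positivity)
  have heq : (2/α) * (α*ε/8) = ε/4 := by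
    field_simp
    ring
  rw [heq] at hy2 hz2
  have hyz : ‖y - z‖ ≤ ‖y - x‖ + ‖z - x‖ := by
    have h : y - z = (y - x) - (z - x) := by abel
    rw [h]
    exact norm_sub_le _ _
  nlinarith [hy2, hz2, hy', hz', hyz]
end

section
/- A Banach space X of dimension greater than 1 has the Daugavet property if and only if every point of its unit sphere is a ∇-point. -/
open scoped ENNReal

variable {X : Type*} [NormedAddCommGroup X] [NormedSpace ℝ X]

private lemma exists_near_sphere' {X : Type*} [NormedAddCommGroup X] [NormedSpace ℝ X]
    (hdim : 1 < Module.rank ℝ X) (x : X) (hx : ‖x‖ = 1) {ρ : ℝ} (hρ : 0 < ρ) :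
    ∃ u : X, ‖u‖ = 1 ∧ u ≠ x ∧ ‖u - x‖ ≤ ρ := by
  have hrk : ¬ (Module.rank ℝ X ≤ 1) := not_le.mpr hdim
  have hz : ¬ ∀ v : X, ∃ r : ℝ, r • x = v := fun h => hrk (rank_le_one_iff.mpr ⟨x, h⟩)
  push_neg at hz
  obtain ⟨z, hzx⟩ := hz
  have hz0 : z ≠ 0 := by
    rintro rfl; exact hzx 0 (zero_smul _ _)
  have hznorm : (0:ℝ) < ‖z‖ := norm_pos_iff.mpr hz0
  set m : ℝ := min (ρ/4) (1/2) with hm_def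
  have hm0 : 0 < m := lt_min (by linarith) (by norm_num)
  have hm1 : m ≤ ρ/4 := min_le_left _ _
  have hm2 : m ≤ 1/2 := min_le_right _ _
  set s : ℝ := m / ‖z‖ with hs_def
  have hs0 : 0 < s := div_pos hm0 hznorm
  have hsz : ‖s • z‖ = m := by
    rw [norm_smul, Real.norm_eq_abs, abs_of_pos hs0, hs_def, div_mul_cancel₀ _ (ne_of_gt hznorm)]
  set v : X := x + s • z with hv_def
  set n : ℝ := ‖v‖ with hn_def
  have hxv : ‖x - v‖ = m := by
    rw [hv_def]; rw [show x - (x + s • z) = -(s • z) by abel, norm_neg, hsz]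
  have habs : |‖x‖ - ‖v‖| ≤ ‖x - v‖ := abs_norm_sub_norm_le x v
  have hn_lb : 1 - m ≤ n := by
    rw [hx, hxv] at habs
    have := abs_le.mp habs
    linarith [this.1]
  have hn_ub : n ≤ 1 + m := by
    rw [hx, hxv] at habs
    have := abs_le.mp habs
    linarith [this.2]
  have hn0 : (0:ℝ) < n := by linarith
  refine ⟨n⁻¹ • v, ?_, ?_, ?_⟩
  · rw [norm_smul, Real.norm_eq_abs, abs_of_pos (inv_pos.mpr hn0), ← hn_def,
      inv_mul_cancel₀ (ne_of_gt hn0)]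
  · intro heq
    have hveq : v = n • x := by
      have := congrArg (fun w => n • w) heq
      simpa [smul_smul, mul_inv_cancel₀ (ne_of_gt hn0)] using this
    have : (s⁻¹ * (n - 1)) • x = z := by
      have h1 : s • z = (n - 1) • x := by
        rw [hv_def] at hveq
        have : s • z = n • x - x := by
          rw [← hveq]; abel
        rw [this, sub_smul, one_smul]
      have := congrArg (fun w => s⁻¹ • w) h1
      simpa [smul_smul, inv_mul_cancel₀ (ne_of_gt hs0), mul_comm] using this.symm
    exact hzx _ this
  · have hdiff : n⁻¹ • v - x = n⁻¹ • (s • z + (1 - n) • x) := by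
      rw [hv_def]
      match_scalars <;> field_simp
    rw [hdiff, norm_smul, Real.norm_eq_abs, abs_of_pos (inv_pos.mpr hn0)]
    have h1 : ‖s • z + (1 - n) • x‖ ≤ m + m := by
      calc ‖s • z + (1 - n) • x‖ ≤ ‖s • z‖ + ‖(1 - n) • x‖ := norm_add_le _ _
        _ = m + |1 - n| := by rw [hsz, norm_smul, Real.norm_eq_abs, hx, mul_one]
        _ ≤ m + m := by
            have : |1 - n| ≤ m := abs_le.mpr ⟨by linarith, by linarith⟩
            linarith
    have hninv : n⁻¹ ≤ 2 := by
      rw [show (2:ℝ) = (1/2)⁻¹ by norm_num]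
      exact inv_anti₀ (by norm_num) (by linarith)
    calc n⁻¹ * ‖s • z + (1 - n) • x‖ ≤ 2 * (m + m) := by
          apply mul_le_mul hninv h1 (norm_nonneg _) (by norm_num)
      _ ≤ ρ := by linarith

set_option maxHeartbeats 1000000 in
set_option maxSynthPendingDepth 2 in
/-- A Banach space of dimension greater than `1` has the Daugavet property (every point of the
unit sphere is a Daugavet point) if and only if every point of its unit sphere is a `∇`-point. -/
theorem daugavetProperty_iff_forall_isNablaPoint
    {X : Type*} [NormedAddCommGroup X] [NormedSpace ℝ X] [CompleteSpace X]
    (hdim : 1 < Module.rank ℝ X) :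
    (∀ x : X, ‖x‖ = 1 → IsDaugavetPoint x) ↔ (∀ x : X, ‖x‖ = 1 → IsNablaPoint x) := by
  constructor
  · intro h x hx
    exact ⟨hx, fun f α hf hα _ ε hε => (h x hx).2 f α hf hα ε hε⟩
  · intro h x hx
    refine ⟨hx, fun f α hf hα ε hε => ?_⟩
    by_cases hxS : x ∈ ballSlice f α
    · -- x belongs to the slice
      obtain ⟨-, hfx⟩ := hxS
      by_cases hα2 : 2 < α
      · -- the slice is the whole ball; take y = -x
        have hb : |f x| ≤ 1 := by
          have hle := f.le_opNorm x
          rw [hf, hx, one_mul, Real.norm_eq_abs] at hle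
          exact hle
        refine ⟨-x, ⟨by rw [norm_neg, hx], ?_⟩, ?_⟩
        · rw [map_neg]
          have := abs_le.mp hb
          linarith [this.2]
        · have hxx : x - -x = (2:ℝ) • x := by module
          rw [hxx, norm_smul, Real.norm_eq_abs, abs_two, hx, mul_one]
          linarith
      · push_neg at hα2
        set c : ℝ := f x - (1 - α) with hc_def
        have hc : 0 < c := by simp only [hc_def]; linarith
        set ρ : ℝ := min (ε/4) (c/2) with hρ_def
        have hρ : 0 < ρ := lt_min (by linarith) (by linarith)
        have hρε : ρ ≤ ε/4 := min_le_left _ _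
        have hρc : ρ ≤ c/2 := min_le_right _ _
        by_cases hu : ∃ u : X, ‖u‖ = 1 ∧ ‖u - x‖ ≤ ρ ∧ f u < 1
        · -- a nearby sphere point with f u < 1 : use the subslice {f > f u}
          obtain ⟨u, hu1, hu2, hu3⟩ := hu
          have hfux : |f u - f x| ≤ ρ := by
            have h1 : f u - f x = f (u - x) := by rw [map_sub]
            have hle := f.le_opNorm (u - x)
            rw [hf, one_mul, Real.norm_eq_abs] at hle
            rw [h1]
            exact le_trans hle hu2
          have hfu_lb : f x - ρ ≤ f u := by
            have := abs_le.mp hfux; linarith [this.1]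
          have hβ : (0:ℝ) < 1 - f u := by linarith
          have hnm : u ∉ ballSlice f (1 - f u) := by
            rintro ⟨-, h2⟩
            simp only [sub_sub_cancel] at h2
            exact lt_irrefl _ h2
          obtain ⟨y, ⟨hy1, hy2⟩, hy3⟩ := (h u hu1).2 f (1 - f u) hf hβ hnm (ε/4) (by linarith)
          simp only [sub_sub_cancel] at hy2
          refine ⟨y, ⟨hy1, by simp only [hc_def] at hρc hfu_lb; linarith⟩, ?_⟩
          have htri : ‖u - y‖ ≤ ‖u - x‖ + ‖x - y‖ := by
            calc ‖u - y‖ = ‖(u - x) + (x - y)‖ := by rw [sub_add_sub_cancel]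
              _ ≤ ‖u - x‖ + ‖x - y‖ := norm_add_le _ _
          linarith
        · -- f equals 1 near x on the sphere; perturb f
          push_neg at hu
          have hfx1 : f x = 1 := by
            have h1 : 1 ≤ f x := hu x hx (by rw [sub_self, norm_zero]; exact le_of_lt hρ)
            have h2 : f x ≤ 1 := by
              have hle := f.le_opNorm x
              rw [hf, hx, one_mul, Real.norm_eq_abs] at hle
              exact le_trans (le_abs_self _) hle
            linarith
          obtain ⟨u, hu1, hune, hu2⟩ := exists_near_sphere' hdim x hx hρ
          have hfu1 : f u = 1 := by
            have h1 : 1 ≤ f u := hu u hu1 hu2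
            have h2 : f u ≤ 1 := by
              have hle := f.le_opNorm u
              rw [hf, hu1, one_mul, Real.norm_eq_abs] at hle
              exact le_trans (le_abs_self _) hle
            linarith
          have hxu0 : x - u ≠ 0 := sub_ne_zero.mpr (Ne.symm hune)
          have hxu_pos : (0:ℝ) < ‖x - u‖ := norm_pos_iff.mpr hxu0
          obtain ⟨φ, hφ1, hφ2⟩ := exists_dual_vector ℝ (x - u) hxu_pos.ne'
          have hφ2' : φ x - φ u = ‖x - u‖ := by
            have hm : φ (x - u) = φ x - φ u := map_sub _ _ _
            rw [← hm]; exact_mod_cast hφ2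
          set t : ℝ := α/4 with ht_def
          have ht0 : 0 < t := by simp only [ht_def]; linarith
          have ht2 : t ≤ 1/2 := by simp only [ht_def]; linarith
          have hφx_bd : |φ x| ≤ 1 := by
            have hle := φ.le_opNorm x
            rw [hφ1, hx, one_mul, Real.norm_eq_abs] at hle
            exact hle
          have hφu_bd : |φ u| ≤ 1 := by
            have hle := φ.le_opNorm u
            rw [hφ1, hu1, one_mul, Real.norm_eq_abs] at hle
            exact hle
          set F : X →L[ℝ] ℝ := f + t • φ with hF_def
          have hFx : F x = 1 + t * φ x := by
            rw [hF_def]; simp [hfx1]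
          have hFu : F u = 1 + t * φ u := by
            rw [hF_def]; simp [hfu1]
          have hFx_pos : 0 < F x := by
            rw [hFx]
            have := abs_le.mp hφx_bd
            nlinarith [this.1]
          have hNF : F x ≤ ‖F‖ := by
            have hle := F.le_opNorm x
            rw [hx, mul_one, Real.norm_eq_abs] at hle
            exact le_trans (le_abs_self _) hle
          have hN0 : (0:ℝ) < ‖F‖ := lt_of_lt_of_le hFx_pos hNF
          have hFu_lt : F u < ‖F‖ := by
            have h1 : F u < F x := by rw [hFx, hFu]; nlinarith
            linarith
          set g : X →L[ℝ] ℝ := ‖F‖⁻¹ • F with hg_def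
          have hgnorm : ‖g‖ = 1 := by
            rw [hg_def, norm_smul ‖F‖⁻¹ F, Real.norm_eq_abs, abs_of_pos (inv_pos.mpr hN0),
              inv_mul_cancel₀ (ne_of_gt hN0)]
          have hgu : g u = ‖F‖⁻¹ * F u := by rw [hg_def]; simp
          have hgu_lt : g u < 1 := by
            rw [hgu]
            have h1 : ‖F‖⁻¹ * F u < ‖F‖⁻¹ * ‖F‖ :=
              mul_lt_mul_of_pos_left hFu_lt (inv_pos.mpr hN0)
            rwa [inv_mul_cancel₀ (ne_of_gt hN0)] at h1
          have hβpos : (0:ℝ) < 1 - g u := by linarith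
          have hnm : u ∉ ballSlice g (1 - g u) := by
            rintro ⟨-, h2⟩
            simp only [sub_sub_cancel] at h2
            exact lt_irrefl _ h2
          obtain ⟨y, ⟨hy1, hy2⟩, hy3⟩ := (h u hu1).2 g (1 - g u) hgnorm hβpos hnm (ε/4) (by linarith)
          simp only [sub_sub_cancel] at hy2
          have hgy : g y = ‖F‖⁻¹ * F y := by rw [hg_def]; simp
          have hFy_gt : F u < F y := by
            rw [hgu, hgy] at hy2
            exact (mul_lt_mul_iff_right₀ (inv_pos.mpr hN0)).mp hy2
          have hφy_bd : |φ y| ≤ 1 := by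
            have hle := φ.le_opNorm y
            rw [hφ1, one_mul, Real.norm_eq_abs] at hle
            exact le_trans hle hy1
          have hFyval : F y = f y + t * φ y := by rw [hF_def]; simp
          have hfy : 1 - α < f y := by
            rw [hFu, hFyval] at hFy_gt
            have h1 := abs_le.mp hφu_bd
            have h2 := abs_le.mp hφy_bd
            simp only [ht_def] at hFy_gt ht0 ⊢
            nlinarith
          refine ⟨y, ⟨hy1, hfy⟩, ?_⟩
          have htri : ‖u - y‖ ≤ ‖u - x‖ + ‖x - y‖ := by
            calc ‖u - y‖ = ‖(u - x) + (x - y)‖ := by rw [sub_add_sub_cancel]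
              _ ≤ ‖u - x‖ + ‖x - y‖ := norm_add_le _ _
          linarith
    · exact (h x hx).2 f α hf hα hxS ε hε
end

section
/- If x is a ∇-point of the unit ball of a Banach space X and y is a denting point of B_X with y ≠ x, then ‖x - y‖ = 2. -/
open scoped ENNReal

variable {X : Type*} [NormedAddCommGroup X] [NormedSpace ℝ X]

/-- If `x` is a `∇`-point and `y` is a denting point of `B_X` with `y ≠ x`,
then `‖x - y‖ = 2`. -/
theorem IsNablaPoint.dist_denting_eq_two
    {X : Type*} [NormedAddCommGroup X] [NormedSpace ℝ X] [CompleteSpace X]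
    {x y : X} (hx : IsNablaPoint x) (hy : IsDentingPoint y) (hxy : y ≠ x) :
    ‖x - y‖ = 2 := by
  obtain ⟨hx1, hxS⟩ := hx
  obtain ⟨hy1, hyS⟩ := hy
  have hd : 0 < ‖y - x‖ := by
    simpa [sub_ne_zero] using hxy
  have key : ∀ ε > (0:ℝ), 2 - 2*ε < ‖x - y‖ := by
    intro ε hε
    have hε'0 : 0 < min ε ‖y - x‖ := lt_min hε hd
    obtain ⟨f, α, hf, hα, hyS', hdiam⟩ := hyS (min ε ‖y - x‖) hε'0
    have hxnot : x ∉ ballSlice f α := by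
      intro hxin
      exact absurd (hdiam y hyS' x hxin) (not_lt.mpr (min_le_right ε ‖y - x‖))
    obtain ⟨z, hz, hz2⟩ := hxS f α hf hα hxnot ε hε
    have hzy : ‖y - z‖ < min ε ‖y - x‖ := hdiam y hyS' z hz
    have htri : ‖x - z‖ ≤ ‖x - y‖ + ‖y - z‖ := norm_sub_le_norm_sub_add_norm_sub x y z
    have h1 : ‖y - z‖ < ε := lt_of_lt_of_le hzy (min_le_left _ _)
    linarith
  have hle : ‖x - y‖ ≤ 2 := by
    calc ‖x - y‖ ≤ ‖x‖ + ‖y‖ := norm_sub_le x y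
    _ ≤ 2 := by rw [hx1]; linarith
  by_contra hne
  have hlt : ‖x - y‖ < 2 := lt_of_le_of_ne hle hne
  have := key ((2 - ‖x - y‖)/2) (by linarith)
  linarith
end

section
/- If X is a strictly convex Banach space and x ∈ S_X is a ∇-point, then every denting point of B_X belongs to {x, -x}. -/
open scoped ENNReal

variable {X : Type*} [NormedAddCommGroup X] [NormedSpace ℝ X]

/-- In a strictly convex Banach space, if `x` is a `∇`-point, then every denting point of the
unit ball belongs to `{x, -x}`. -/
theorem IsNablaPoint.dentingPoint_mem_pair_of_strictConvex
    {X : Type*} [NormedAddCommGroup X] [NormedSpace ℝ X] [CompleteSpace X]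
    [StrictConvexSpace ℝ X] {x : X} (hx : IsNablaPoint x) :
    ∀ y : X, IsDentingPoint y → y = x ∨ y = -x := by
  rintro y ⟨hy1, hy2⟩
  by_cases hxy : y = x
  · exact Or.inl hxy
  right
  have hδ : 0 < ‖y - x‖ := by
    rw [norm_pos_iff, sub_ne_zero]; exact hxy
  have key : ∀ ε : ℝ, 0 < ε → ε < ‖y - x‖ → 2 - 2 * ε < ‖x - y‖ := by
    intro ε hε hεδ
    obtain ⟨f, α, hf, hα, hyS, hdiam⟩ := hy2 ε hε
    have hxS : x ∉ ballSlice f α := fun hxS => absurd (hdiam y hyS x hxS) (by linarith)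
    obtain ⟨y', hy'S, hy'⟩ := hx.2 f α hf hα hxS ε hε
    have h1 : ‖y' - y‖ < ε := hdiam y' hy'S y hyS
    have h2 : ‖x - y'‖ ≤ ‖x - y‖ + ‖y - y'‖ := norm_sub_le_norm_sub_add_norm_sub x y y'
    have h3 : ‖y - y'‖ = ‖y' - y‖ := norm_sub_rev y y'
    linarith
  have h2 : ‖x - y‖ = 2 := by
    have hle : ‖x - y‖ ≤ 2 := by
      have := norm_sub_le x y
      rw [hx.1] at this; linarith
    by_contra h
    have hlt : ‖x - y‖ < 2 := lt_of_le_of_ne hle h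
    set ε := min (‖y - x‖ / 2) ((2 - ‖x - y‖) / 4) with hεdef
    have hε : 0 < ε := lt_min (by linarith) (by linarith)
    have := key ε hε (lt_of_le_of_lt (min_le_left _ _) (by linarith))
    have h4 : ε ≤ (2 - ‖x - y‖) / 4 := min_le_right _ _
    linarith
  have hny : ‖y‖ = 1 := by
    have h1 : ‖x - y‖ ≤ ‖x‖ + ‖y‖ := norm_sub_le x y
    rw [hx.1, h2] at h1
    linarith [hy1, h1]
  have hray : SameRay ℝ x (-y) := by
    rw [sameRay_iff_norm_add]
    rw [norm_neg, hx.1, hny, ← sub_eq_add_neg, h2]; norm_num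
  have := hray.eq_of_norm_eq (by rw [norm_neg, hx.1, hny])
  rw [this]; simp
end

section
/- In a Banach space X with the Radon–Nikodým property, a point x ∈ S_X is a ∇-point if and only if ‖x - y‖ = 2 for every denting point y of B_X with y ≠ x. -/
open scoped ENNReal

variable {X : Type*} [NormedAddCommGroup X] [NormedSpace ℝ X]

/-- In a Banach space with the Radon–Nikodým property (via the geometric characterization:
every slice of the unit ball contains a denting point), a point `x ∈ S_X` is a `∇`-point
if and only if `‖x - y‖ = 2` for every denting point `y` of `B_X` with `y ≠ x`. -/
theorem isNablaPoint_iff_dist_denting_eq_two_of_RNP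
    {X : Type*} [NormedAddCommGroup X] [NormedSpace ℝ X] [CompleteSpace X]
    (hRNP : ∀ (f : X →L[ℝ] ℝ) (α : ℝ), ‖f‖ = 1 → 0 < α →
      ∃ y ∈ ballSlice f α, IsDentingPoint y)
    {x : X} (hx : ‖x‖ = 1) :
    IsNablaPoint x ↔ ∀ y : X, IsDentingPoint y → y ≠ x → ‖x - y‖ = 2 := by
  constructor
  · rintro ⟨-, hN⟩ y ⟨hy1, hyd⟩ hyx
    have hpos : 0 < ‖x - y‖ := by
      rw [norm_pos_iff, sub_ne_zero]; exact hyx.symm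
    have h2 : ‖x - y‖ ≤ 2 := by
      calc ‖x - y‖ ≤ ‖x‖ + ‖y‖ := norm_sub_le _ _
        _ ≤ 2 := by rw [hx]; linarith
    have key : ∀ ε > (0:ℝ), 2 ≤ ‖x - y‖ + ε := by
      intro ε hε
      set δ := min (ε/2) ‖x - y‖ with hδ
      have hδpos : 0 < δ := lt_min (by linarith) hpos
      have hδ1 : δ ≤ ε/2 := min_le_left _ _
      have hδ2 : δ ≤ ‖x - y‖ := min_le_right _ _
      obtain ⟨f, α, hf, hα, hyS, hdiam⟩ := hyd δ hδpos
      have hxS : x ∉ ballSlice f α := by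
        intro hxS
        have := hdiam x hxS y hyS
        linarith
      obtain ⟨z, hzS, hz⟩ := hN f α hf hα hxS (ε/2) (by linarith)
      have h3 : ‖z - y‖ < δ := hdiam z hzS y hyS
      have h4 := norm_add_le (x - y) (y - z)
      rw [sub_add_sub_cancel, norm_sub_rev y z] at h4
      linarith
    have := le_of_forall_pos_le_add key
    linarith
  · intro h
    refine ⟨hx, ?_⟩
    intro f α hf hα hxS ε hε
    obtain ⟨y, hyS, hyd⟩ := hRNP f α hf hα
    have hyx : y ≠ x := fun e => hxS (e ▸ hyS)
    have := h y hyd hyx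
    exact ⟨y, hyS, by linarith⟩
end

section
/- Every element of the unit vector basis of ℓ₁ is a ∇-point of the unit ball of ℓ₁. -/
open scoped ENNReal

variable {X : Type*} [NormedAddCommGroup X] [NormedSpace ℝ X]

noncomputable abbrev eb (n : ℕ) : lp (fun _ : ℕ => ℝ) 1 := lp.single 1 n 1

lemma eb_norm (n : ℕ) : ‖eb n‖ = 1 := by
  have := lp.norm_single (p := 1) (E := fun _ : ℕ => ℝ) (by norm_num) n (1:ℝ)
  simpa using this

lemma hasSum_norm_l1 (x : lp (fun _ : ℕ => ℝ) 1) : HasSum (fun i => ‖x i‖) ‖x‖ := by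
  have := lp.hasSum_norm (p := 1) (by norm_num) x
  simpa using this

lemma single_eq_smul (m : ℕ) (c : ℝ) :
    lp.single (E := fun _ : ℕ => ℝ) 1 m c = c • eb m := by
  apply lp.ext
  funext i
  rcases eq_or_ne i m with h | h
  · subst h
    simp [eb, lp.single_apply_self]
  · simp [eb, lp.single_apply_ne 1 m _ h, Pi.single_eq_of_ne h]

lemma bound_lemma (f : lp (fun _ : ℕ => ℝ) 1 →L[ℝ] ℝ) (c : ℝ) (hc : 0 ≤ c)
    (h : ∀ m, |f (eb m)| ≤ c) (x : lp (fun _ : ℕ => ℝ) 1) : ‖f x‖ ≤ c * ‖x‖ := by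
  have hs : HasSum (fun m => f (lp.single 1 m (x m))) (f x) :=
    (lp.hasSum_single (by norm_num) x).mapL f
  have hval : ∀ m, ‖f (lp.single 1 m (x m))‖ = ‖x m‖ * |f (eb m)| := by
    intro m
    rw [single_eq_smul, map_smul]
    simp [abs_mul, norm_smul]
  have hle : ∀ m, ‖f (lp.single 1 m (x m))‖ ≤ ‖x m‖ * c := by
    intro m
    rw [hval m]
    exact mul_le_mul_of_nonneg_left (h m) (norm_nonneg _)
  have hsum2 : HasSum (fun m => ‖x m‖ * c) (‖x‖ * c) := (hasSum_norm_l1 x).mul_right c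
  have hsummable : Summable fun m => ‖f (lp.single 1 m (x m))‖ :=
    Summable.of_nonneg_of_le (fun m => norm_nonneg _) hle hsum2.summable
  calc ‖f x‖ = ‖∑' m, f (lp.single 1 m (x m))‖ := by rw [hs.tsum_eq]
    _ ≤ ∑' m, ‖f (lp.single 1 m (x m))‖ := norm_tsum_le_tsum_norm hsummable
    _ ≤ ∑' m, ‖x m‖ * c := Summable.tsum_le_tsum hle hsummable hsum2.summable
    _ = ‖x‖ * c := hsum2.tsum_eq
    _ = c * ‖x‖ := mul_comm _ _

lemma norm_sub_eb (n m : ℕ) (hnm : m ≠ n) (s : ℝ) (hs : |s| = 1) :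
    2 ≤ ‖eb n - s • eb m‖ := by
  set z := eb n - s • eb m with hz
  have hzn : z n = 1 := by
    rw [show z n = eb n n - s * eb m n from rfl]
    simp [eb, lp.single_apply_self, lp.single_apply_ne 1 m _ (Ne.symm hnm), Pi.single_eq_of_ne hnm, Pi.single_eq_of_ne (Ne.symm hnm)]
  have hzm : z m = -s := by
    rw [show z m = eb n m - s * eb m m from rfl]
    simp [eb, lp.single_apply_self, lp.single_apply_ne 1 n _ hnm, Pi.single_eq_of_ne hnm, Pi.single_eq_of_ne (Ne.symm hnm)]
  have hsum := hasSum_norm_l1 z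
  have := sum_le_hasSum ({n, m} : Finset ℕ) (fun i _ => norm_nonneg (z i)) hsum
  rw [Finset.sum_insert (by simp [Ne.symm hnm]), Finset.sum_singleton, hzn, hzm] at this
  simp only [Real.norm_eq_abs, abs_neg, abs_one, hs] at this
  linarith


/-- Every element of the unit vector basis of `ℓ₁` is a `∇`-point of the unit ball of `ℓ₁`. -/
theorem isNablaPoint_lp_single (n : ℕ) :
    IsNablaPoint (lp.single (E := fun _ : ℕ => ℝ) 1 n 1) := by
  refine ⟨eb_norm n, ?_⟩
  intro f α hf hα hx ε hε
  set α' := min α 1 with hα'def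
  have hα' : 0 < α' := lt_min hα one_pos
  have hα'le : α' ≤ α := min_le_left _ _
  have h1 : 0 ≤ 1 - α' := by
    have : α' ≤ 1 := min_le_right _ _
    linarith
  have hm : ∃ m, 1 - α' < |f (eb m)| := by
    by_contra h
    push_neg at h
    have hb : ‖f‖ ≤ 1 - α' :=
      f.opNorm_le_bound h1 (fun y => bound_lemma f _ h1 h y)
    rw [hf] at hb; linarith
  obtain ⟨m, hm⟩ := hm
  have hfx : f (eb n) ≤ 1 - α := by
    by_contra h
    push_neg at h
    exact hx ⟨le_of_eq (eb_norm n), h⟩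
  rcases eq_or_ne m n with rfl | hmn
  · have hneg : 1 - α' < -(f (eb m)) := by
      rcases lt_abs.mp hm with h | h
      · linarith
      · linarith
    refine ⟨-eb m, ⟨?_, ?_⟩, ?_⟩
    · rw [norm_neg, eb_norm]
    · rw [map_neg]; linarith
    · have heq : lp.single (E := fun _ : ℕ => ℝ) 1 m 1 - (-eb m) = (2:ℝ) • eb m := by
        rw [sub_neg_eq_add, two_smul]
      rw [heq, norm_smul, eb_norm]
      simp only [Real.norm_ofNat, mul_one]
      linarith
  · set s : ℝ := if 0 ≤ f (eb m) then 1 else -1 with hsdef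
    have hs : |s| = 1 := by
      rw [hsdef]; split_ifs <;> simp
    have hval : s * f (eb m) = |f (eb m)| := by
      rw [hsdef]; split_ifs with h
      · rw [one_mul, abs_of_nonneg h]
      · rw [abs_of_neg (lt_of_not_ge h)]; ring
    refine ⟨s • eb m, ⟨?_, ?_⟩, ?_⟩
    · rw [norm_smul, eb_norm, Real.norm_eq_abs, hs, mul_one]
    · rw [map_smul, smul_eq_mul, hval]; linarith
    · have := norm_sub_eb n m hmn s hs
      calc 2 - ε < 2 := by linarith
        _ ≤ ‖eb n - s • eb m‖ := this
end

section
/- For every n ∈ ℕ and every choice of signs θ ∈ {-1,1}ⁿ, the point Σ_{i=1}^n θ_i e_i is a ∇-point of the unit ball of ℓ∞ⁿ. -/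
open scoped ENNReal

variable {X : Type*} [NormedAddCommGroup X] [NormedSpace ℝ X]

/-- For every `n ∈ ℕ`, `n ≥ 1`, and every choice of signs `θ ∈ {-1, 1}ⁿ`, the point
`∑ θ i • e i` (that is, the vector `θ` itself) is a `∇`-point of the unit ball of `ℓ∞ⁿ`,
i.e. of `ℝⁿ` with the supremum norm. -/
theorem isNablaPoint_signs_pi (n : ℕ) (hn : 0 < n) (θ : Fin n → ℝ)
    (hθ : ∀ i, θ i = 1 ∨ θ i = -1) :
    IsNablaPoint θ := by
  have hθabs : ∀ i, |θ i| = 1 := by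
    intro i; rcases hθ i with h | h <;> simp [h]
  have hθnorm : ‖θ‖ = 1 := by
    apply le_antisymm
    · exact (pi_norm_le_iff_of_nonneg zero_le_one).2 fun i => by
        rw [Real.norm_eq_abs, hθabs i]
    · have := norm_le_pi_norm θ ⟨0, hn⟩
      rwa [Real.norm_eq_abs, hθabs] at this
  refine ⟨hθnorm, ?_⟩
  intro f α hf hα hx ε hε
  set a : Fin n → ℝ := fun i => f (Pi.single i 1) with ha
  have hfz : ∀ z : Fin n → ℝ, f z = ∑ i, z i * a i := by
    intro z
    conv_lhs => rw [← Finset.univ_sum_single z]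
    rw [map_sum]
    refine Finset.sum_congr rfl fun i _ => ?_
    have h1 : Pi.single i (z i) = z i • (Pi.single i (1:ℝ) : Fin n → ℝ) := by
      rw [← Pi.single_smul, smul_eq_mul, mul_one]
    rw [h1, map_smul, smul_eq_mul]
  set y : Fin n → ℝ := fun i => if a i = 0 then -θ i else if 0 < a i then 1 else -1 with hy
  have hay : ∀ i, y i * a i = |a i| := by
    intro i
    by_cases h0 : a i = 0
    · simp [hy, h0]
    · rcases lt_or_gt_of_ne h0 with h | h
      · simp [hy, h0, not_lt.2 h.le, abs_of_neg h]
      · simp [hy, h0, h, abs_of_pos h]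
  have hyabs : ∀ i, |y i| = 1 := by
    intro i
    by_cases h0 : a i = 0
    · simp [hy, h0, hθabs i]
    · by_cases h : 0 < a i <;> simp [hy, h0, h]
  have hynorm : ‖y‖ ≤ 1 :=
    (pi_norm_le_iff_of_nonneg zero_le_one).2 fun i => by rw [Real.norm_eq_abs, hyabs i]
  have hsum : ‖f‖ ≤ ∑ i, |a i| := by
    apply ContinuousLinearMap.opNorm_le_bound _ (by positivity)
    intro z
    rw [hfz z, Real.norm_eq_abs]
    calc |∑ i, z i * a i| ≤ ∑ i, |z i * a i| := Finset.abs_sum_le_sum_abs _ _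
      _ ≤ ∑ i, |a i| * ‖z‖ := by
          refine Finset.sum_le_sum fun i _ => ?_
          rw [abs_mul, mul_comm]
          exact mul_le_mul_of_nonneg_left (by simpa using norm_le_pi_norm z i) (abs_nonneg _)
      _ = (∑ i, |a i|) * ‖z‖ := (Finset.sum_mul _ _ _).symm
  have hfy1 : f y = ∑ i, |a i| := by
    rw [hfz]; exact Finset.sum_congr rfl fun i _ => hay i
  have hfy1' : 1 ≤ f y := by rw [hfy1, ← hf]; exact hsum
  have hymem : y ∈ ballSlice f α := ⟨hynorm, by linarith⟩
  have hj : ∃ j, y j = -θ j := by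
    by_cases h0 : ∃ j, a j = 0
    · obtain ⟨j, hj0⟩ := h0
      exact ⟨j, by simp [hy, hj0]⟩
    · push_neg at h0
      by_contra hc
      push_neg at hc
      have hyt : y = θ := by
        funext i
        rcases (abs_eq zero_le_one).1 (hyabs i) with h1 | h1 <;>
          rcases hθ i with h2 | h2 <;>
            first
              | (exact h1.trans h2.symm)
              | (exact absurd (by rw [h1, h2]; try ring) (hc i))
      exact hx (hyt ▸ hymem)
  obtain ⟨j, hj⟩ := hj
  refine ⟨y, hymem, ?_⟩
  have h2 : (2:ℝ) ≤ ‖θ - y‖ := by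
    have := norm_le_pi_norm (θ - y) j
    have hval : ‖(θ - y) j‖ = 2 := by
      rw [Pi.sub_apply, hj, sub_neg_eq_add, Real.norm_eq_abs, ← two_mul, abs_mul,
        hθabs j]
      norm_num
    linarith [hval ▸ this]
  linarith
end

section
/- Let X and Y be Banach spaces and x ∈ S_X. Then x is a ∇-point in X if and only if (x,0) is a ∇-point in the ℓ₁-sum X ⊕₁ Y. -/
open scoped ENNReal

variable {X : Type*} [NormedAddCommGroup X] [NormedSpace ℝ X]

section AuxNabla

set_option linter.unusedSectionVars false

variable {Y : Type*} [NormedAddCommGroup Y] [NormedSpace ℝ Y]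

lemma normL1 (z : WithLp 1 (X × Y)) : ‖z‖ = ‖z.fst‖ + ‖z.snd‖ := by
  rw [WithLp.prod_norm_eq_add (by norm_num)]
  norm_num

lemma normL1_mk (u : X) (v : Y) :
    ‖(WithLp.equiv 1 (X × Y)).symm (u, v)‖ = ‖u‖ + ‖v‖ := normL1 _

lemma decompL1 (z : WithLp 1 (X × Y)) :
    (WithLp.equiv 1 (X × Y)).symm (z.fst, 0) + (WithLp.equiv 1 (X × Y)).symm (0, z.snd) = z := by
  rw [WithLp.ext_iff]; apply Prod.ext <;> simp

end AuxNabla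

/-- `x ∈ S_X` is a `∇`-point in `X` if and only if `(x, 0)` is a `∇`-point in the
`ℓ₁`-sum `X ⊕₁ Y`. -/
theorem isNablaPoint_iff_isNablaPoint_prodL1
    {X : Type*} [NormedAddCommGroup X] [NormedSpace ℝ X] [CompleteSpace X]
    {Y : Type*} [NormedAddCommGroup Y] [NormedSpace ℝ Y] [CompleteSpace Y]
    (x : X) (hx : ‖x‖ = 1) :
    IsNablaPoint x ↔
      IsNablaPoint ((WithLp.equiv 1 (X × Y)).symm (x, 0)) := by
  classical
  set J := (WithLp.equiv 1 (X × Y)).symm with hJ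
  have hJx : ‖J (x, 0)‖ = 1 := by rw [hJ, normL1_mk]; simp [hx]
  constructor
  · rintro ⟨-, hN⟩
    refine ⟨hJx, ?_⟩
    intro F α hF hα hxs ε hε
    set f : X →L[ℝ] ℝ := F.comp
      (((WithLp.prodContinuousLinearEquiv 1 ℝ X Y).symm.toContinuousLinearMap).comp
        (ContinuousLinearMap.inl ℝ X Y)) with hfdef
    set g : Y →L[ℝ] ℝ := F.comp
      (((WithLp.prodContinuousLinearEquiv 1 ℝ X Y).symm.toContinuousLinearMap).comp
        (ContinuousLinearMap.inr ℝ X Y)) with hgdef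
    have hfu : ∀ u : X, f u = F (J (u, 0)) := fun u => rfl
    have hgv : ∀ v : Y, g v = F (J (0, v)) := fun v => rfl
    have hgle : ‖g‖ ≤ 1 := by
      refine ContinuousLinearMap.opNorm_le_bound _ zero_le_one fun v => ?_
      calc ‖g v‖ = ‖F (J (0, v))‖ := rfl
        _ ≤ ‖F‖ * ‖J (0, v)‖ := F.le_opNorm _
        _ = 1 * ‖v‖ := by rw [hF, hJ, normL1_mk]; simp
    have hfle : ‖f‖ ≤ 1 := by
      refine ContinuousLinearMap.opNorm_le_bound _ zero_le_one fun u => ?_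
      calc ‖f u‖ = ‖F (J (u, 0))‖ := rfl
        _ ≤ ‖F‖ * ‖J (u, 0)‖ := F.le_opNorm _
        _ = 1 * ‖u‖ := by rw [hF, hJ, normL1_mk]; simp
    set δ := min α ε with hδdef
    have hδ : 0 < δ := lt_min hα hε
    have hδα : δ ≤ α := min_le_left _ _
    have hδε : δ ≤ ε := min_le_right _ _
    rcases lt_or_ge (1 - δ) ‖g‖ with hcase | hcase
    · -- use the second coordinate
      obtain ⟨v', hv1, hv2⟩ := g.exists_lt_apply_of_lt_opNorm hcase
      have hv2' : 1 - δ < |g v'| := by simpa [Real.norm_eq_abs] using hv2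
      set v := if 0 ≤ g v' then v' else -v' with hvdef
      have hgvv : g v = |g v'| := by
        rcases le_or_gt 0 (g v') with h | h
        · rw [hvdef, if_pos h, abs_of_nonneg h]
        · rw [hvdef, if_neg (not_le.mpr h), map_neg, abs_of_neg h]
      have hnv : ‖v‖ = ‖v'‖ := by
        by_cases h : 0 ≤ g v' <;> simp [hvdef, h]
      have hgvpos : 1 - δ < g v := hgvv ▸ hv2'
      have hvge : g v ≤ ‖v‖ := by
        have h1 : |g v| ≤ ‖g‖ * ‖v‖ := by
          simpa [Real.norm_eq_abs] using g.le_opNorm v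
        have h2 : ‖g‖ * ‖v‖ ≤ 1 * ‖v‖ :=
          mul_le_mul_of_nonneg_right hgle (norm_nonneg _)
        calc g v ≤ |g v| := le_abs_self _
          _ ≤ 1 * ‖v‖ := h1.trans h2
          _ = ‖v‖ := one_mul _
      refine ⟨J (0, v), ⟨?_, ?_⟩, ?_⟩
      · rw [hJ, normL1_mk]
        simp only [norm_zero, zero_add]
        rw [hnv]; exact hv1.le
      · have : 1 - α ≤ 1 - δ := by linarith
        calc 1 - α ≤ 1 - δ := this
          _ < g v := hgvpos
          _ = F (J (0, v)) := hgv v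
      · have hsub : J (x, 0) - J (0, v) = J (x - 0, 0 - v) := rfl
        have hnorm : ‖J (x, 0) - J (0, v)‖ = ‖x‖ + ‖v‖ := by
          rw [hsub, hJ, normL1_mk]; simp
        rw [hnorm, hx]
        have : 1 - δ < ‖v‖ := lt_of_lt_of_le hgvpos hvge
        linarith
    · -- use the first coordinate
      have hg1 : ‖g‖ < 1 := lt_of_le_of_lt hcase (by linarith)
      have hFle : ‖F‖ ≤ max ‖f‖ ‖g‖ := by
        refine ContinuousLinearMap.opNorm_le_bound _
          (le_max_of_le_left (norm_nonneg f)) fun z => ?_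
        have hzd : F z = f z.fst + g z.snd := by
          rw [hfu, hgv, ← map_add, hJ, decompL1]
        rw [hzd, normL1 z]
        calc ‖f z.fst + g z.snd‖ ≤ ‖f z.fst‖ + ‖g z.snd‖ := norm_add_le _ _
          _ ≤ ‖f‖ * ‖z.fst‖ + ‖g‖ * ‖z.snd‖ :=
              add_le_add (f.le_opNorm _) (g.le_opNorm _)
          _ ≤ max ‖f‖ ‖g‖ * ‖z.fst‖ + max ‖f‖ ‖g‖ * ‖z.snd‖ :=
              add_le_add (mul_le_mul_of_nonneg_right (le_max_left _ _) (norm_nonneg _))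
                (mul_le_mul_of_nonneg_right (le_max_right _ _) (norm_nonneg _))
          _ = max ‖f‖ ‖g‖ * (‖z.fst‖ + ‖z.snd‖) := by ring
      have hf1 : ‖f‖ = 1 := by
        refine le_antisymm hfle ?_
        have h1 : (1 : ℝ) ≤ max ‖f‖ ‖g‖ := hF ▸ hFle
        rcases max_cases ‖f‖ ‖g‖ with ⟨h, _⟩ | ⟨h, _⟩
        · rw [h] at h1; exact h1
        · rw [h] at h1; linarith
      have hxf : f x ≤ 1 - α := by
        by_contra h
        push_neg at h
        exact hxs ⟨hJx.le, (hfu x) ▸ h⟩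
      have hxs' : x ∉ ballSlice f α := fun hmem => absurd hmem.2 (not_lt.mpr hxf)
      obtain ⟨y, ⟨hy1, hy2⟩, hy3⟩ := hN f α hf1 hα hxs' ε hε
      refine ⟨J (y, 0), ⟨?_, ?_⟩, ?_⟩
      · rw [hJ, normL1_mk]; simpa
      · exact (hfu y) ▸ hy2
      · have hsub : J (x, 0) - J (y, 0) = J (x - y, 0 - 0) := rfl
        have hnorm : ‖J (x, 0) - J (y, 0)‖ = ‖x - y‖ := by
          rw [hsub, hJ, normL1_mk]; simp
        rw [hnorm]; exact hy3
  · rintro ⟨-, hN⟩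
    refine ⟨hx, ?_⟩
    intro f α hf hα hxs ε hε
    set F : WithLp 1 (X × Y) →L[ℝ] ℝ := f.comp
      ((ContinuousLinearMap.fst ℝ X Y).comp
        (WithLp.prodContinuousLinearEquiv 1 ℝ X Y).toContinuousLinearMap) with hFdef
    have hFz : ∀ z : WithLp 1 (X × Y), F z = f z.fst := fun z => rfl
    have hF1 : ‖F‖ = 1 := by
      apply le_antisymm
      · refine ContinuousLinearMap.opNorm_le_bound _ zero_le_one fun z => ?_
        calc ‖F z‖ = ‖f z.fst‖ := rfl
          _ ≤ ‖f‖ * ‖z.fst‖ := f.le_opNorm _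
          _ ≤ 1 * ‖z‖ := by
              rw [hf, one_mul, one_mul, normL1 z]
              linarith [norm_nonneg z.snd]
      · rw [← hf]
        refine ContinuousLinearMap.opNorm_le_bound _ (norm_nonneg F) fun u => ?_
        calc ‖f u‖ = ‖F (J (u, 0))‖ := rfl
          _ ≤ ‖F‖ * ‖J (u, 0)‖ := F.le_opNorm _
          _ = ‖F‖ * ‖u‖ := by rw [hJ, normL1_mk]; simp
    set α' := min α (ε / 2) with hα'def
    have hα' : 0 < α' := lt_min hα (half_pos hε)
    have hα'α : α' ≤ α := min_le_left _ _
    have hα'ε : α' ≤ ε / 2 := min_le_right _ _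
    have hxf : f x ≤ 1 - α := by
      by_contra h
      push_neg at h
      exact hxs ⟨hx.le, h⟩
    have hxs' : J (x, 0) ∉ ballSlice F α' := by
      rintro ⟨-, h2⟩
      have : F (J (x, 0)) = f x := hFz _
      rw [this] at h2
      linarith
    obtain ⟨z, ⟨hz1, hz2⟩, hz3⟩ := hN F α' hF1 hα' hxs' (ε / 2) (half_pos hε)
    rw [hFz z] at hz2
    have hzn : ‖z‖ = ‖z.fst‖ + ‖z.snd‖ := normL1 z
    have hfb : f z.fst ≤ ‖z.fst‖ := by
      have h1 : |f z.fst| ≤ ‖f‖ * ‖z.fst‖ := by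
        simpa [Real.norm_eq_abs] using f.le_opNorm z.fst
      rw [hf, one_mul] at h1
      exact (le_abs_self _).trans h1
    have hsnd : ‖z.snd‖ < α' := by linarith
    have hdist : ‖J (x, 0) - z‖ = ‖x - z.fst‖ + ‖z.snd‖ := by
      rw [normL1]
      congr 1
      show ‖(0 : Y) - z.snd‖ = ‖z.snd‖
      rw [zero_sub, norm_neg]
    rw [hdist] at hz3
    refine ⟨z.fst, ⟨?_, ?_⟩, ?_⟩
    · linarith [norm_nonneg z.snd]
    · linarith
    · linarith
end

section
/- Let X, Y be Banach spaces, x ∈ S_X, y ∈ S_Y, and a,b > 0 with a+b = 1. If (ax, by) is a ∇-point in X ⊕₁ Y, then both x and y are Daugavet points. -/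
open scoped ENNReal

variable {X : Type*} [NormedAddCommGroup X] [NormedSpace ℝ X]

section aux
variable {Y : Type*} [NormedAddCommGroup Y] [NormedSpace ℝ Y]

omit [NormedSpace ℝ X] [NormedSpace ℝ Y] in
lemma L1norm (w : WithLp 1 (X × Y)) : ‖w‖ = ‖w.fst‖ + ‖w.snd‖ := by
  rw [WithLp.prod_norm_eq_add (by norm_num)]
  norm_num

noncomputable def projX (f : X →L[ℝ] ℝ) : WithLp 1 (X × Y) →L[ℝ] ℝ :=
  f.comp ((ContinuousLinearMap.fst ℝ X Y).comp
    (WithLp.prodContinuousLinearEquiv 1 ℝ X Y).toContinuousLinearMap)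

@[simp] lemma projX_apply (f : X →L[ℝ] ℝ) (w : WithLp 1 (X × Y)) :
    projX f w = f w.fst := rfl

noncomputable def projY (f : Y →L[ℝ] ℝ) : WithLp 1 (X × Y) →L[ℝ] ℝ :=
  f.comp ((ContinuousLinearMap.snd ℝ X Y).comp
    (WithLp.prodContinuousLinearEquiv 1 ℝ X Y).toContinuousLinearMap)

@[simp] lemma projY_apply (f : Y →L[ℝ] ℝ) (w : WithLp 1 (X × Y)) :
    projY f w = f w.snd := rfl

lemma projX_norm (f : X →L[ℝ] ℝ) (hf : ‖f‖ = 1) : ‖projX (Y := Y) f‖ = 1 := by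
  apply le_antisymm
  · apply ContinuousLinearMap.opNorm_le_bound _ zero_le_one
    intro w
    rw [projX_apply, L1norm, one_mul]
    calc ‖f w.fst‖ ≤ ‖f‖ * ‖w.fst‖ := f.le_opNorm _
    _ ≤ ‖w.fst‖ + ‖w.snd‖ := by
        rw [hf, one_mul]; exact le_add_of_nonneg_right (norm_nonneg _)
  · rw [← hf]
    apply ContinuousLinearMap.opNorm_le_bound _ (norm_nonneg _)
    intro u
    calc ‖f u‖ = ‖projX (Y := Y) f ((WithLp.equiv 1 (X × Y)).symm (u, 0))‖ := by
          rw [projX_apply, WithLp.equiv_symm_apply, WithLp.toLp_fst]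
    _ ≤ ‖projX (Y := Y) f‖ * ‖(WithLp.equiv 1 (X × Y)).symm (u, 0)‖ :=
          ContinuousLinearMap.le_opNorm _ _
    _ = ‖projX (Y := Y) f‖ * ‖u‖ := by rw [WithLp.equiv_symm_apply, WithLp.norm_toLp_fst]

lemma projY_norm (f : Y →L[ℝ] ℝ) (hf : ‖f‖ = 1) : ‖projY (X := X) f‖ = 1 := by
  apply le_antisymm
  · apply ContinuousLinearMap.opNorm_le_bound _ zero_le_one
    intro w
    rw [projY_apply, L1norm, one_mul]
    calc ‖f w.snd‖ ≤ ‖f‖ * ‖w.snd‖ := f.le_opNorm _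
    _ ≤ ‖w.fst‖ + ‖w.snd‖ := by
        rw [hf, one_mul]; exact le_add_of_nonneg_left (norm_nonneg _)
  · rw [← hf]
    apply ContinuousLinearMap.opNorm_le_bound _ (norm_nonneg _)
    intro u
    calc ‖f u‖ = ‖projY (X := X) f ((WithLp.equiv 1 (X × Y)).symm (0, u))‖ := by
          rw [projY_apply, WithLp.equiv_symm_apply, WithLp.toLp_snd]
    _ ≤ ‖projY (X := X) f‖ * ‖(WithLp.equiv 1 (X × Y)).symm (0, u)‖ :=
          ContinuousLinearMap.le_opNorm _ _
    _ = ‖projY (X := X) f‖ * ‖u‖ := by rw [WithLp.equiv_symm_apply, WithLp.norm_toLp_snd]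

/-- The quantitative renorming lemma. -/
lemma key_lemma {x u : X} {a ε : ℝ} (ha : 0 < a) (hx : ‖x‖ = 1) (hau : a ≤ ‖u‖)
    (hε : 0 < ε) (hd : a + ‖u‖ - a * ε / 2 < ‖a • x - u‖) :
    2 - ε < ‖x - ‖u‖⁻¹ • u‖ := by
  have hu0 : 0 < ‖u‖ := lt_of_lt_of_le ha hau
  set w := ‖u‖⁻¹ • u with hw
  have h1 : u - a • w = (1 - a * ‖u‖⁻¹) • u := by
    rw [hw, smul_smul, sub_smul, one_smul]
  have h2 : ‖u - a • w‖ = ‖u‖ - a := by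
    rw [h1, norm_smul, Real.norm_eq_abs, abs_of_nonneg, sub_mul, one_mul,
      mul_assoc, inv_mul_cancel₀ hu0.ne', mul_one]
    have : a * ‖u‖⁻¹ ≤ 1 := by
      rw [← div_eq_mul_inv, div_le_one hu0]; exact hau
    linarith
  have h3 : ‖a • x - a • w‖ = a * ‖x - w‖ := by
    rw [← smul_sub, norm_smul, Real.norm_eq_abs, abs_of_pos ha]
  have h4 : ‖a • x - u‖ ≤ ‖a • x - a • w‖ + ‖u - a • w‖ := by
    have : a • x - u = (a • x - a • w) - (u - a • w) := by abel
    rw [this]; exact norm_sub_le _ _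
  have h5 : a * (2 - ε / 2) < a * ‖x - w‖ := by
    rw [← h3]; nlinarith
  have := lt_of_mul_lt_mul_left (by nlinarith : a * (2 - ε) < a * ‖x - w‖) ha.le
  linarith [this]

end aux


/-- If `x ∈ S_X`, `y ∈ S_Y`, `a, b > 0` with `a + b = 1`, and `(a • x, b • y)` is a `∇`-point
in `X ⊕₁ Y`, then both `x` and `y` are Daugavet points. -/
theorem isDaugavetPoint_of_isNablaPoint_prodL1
    {X : Type*} [NormedAddCommGroup X] [NormedSpace ℝ X] [CompleteSpace X]
    {Y : Type*} [NormedAddCommGroup Y] [NormedSpace ℝ Y] [CompleteSpace Y]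
    {x : X} {y : Y} (hx : ‖x‖ = 1) (hy : ‖y‖ = 1)
    {a b : ℝ} (ha : 0 < a) (hb : 0 < b) (hab : a + b = 1)
    (h : IsNablaPoint ((WithLp.equiv 1 (X × Y)).symm (a • x, b • y))) :
    IsDaugavetPoint x ∧ IsDaugavetPoint y := by
  obtain ⟨hz, hnab⟩ := h
  set z := (WithLp.equiv 1 (X × Y)).symm (a • x, b • y) with hzdef
  constructor
  · refine ⟨hx, ?_⟩
    intro f α hf hα ε hε
    set β := min α b with hβ
    have hβ0 : 0 < β := lt_min hα hb
    have hβb : β ≤ b := min_le_right _ _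
    have hβα : β ≤ α := min_le_left _ _
    have hε'0 : 0 < a * ε / 2 := by positivity
    have hz_not : z ∉ ballSlice (projX f) β := by
      rintro ⟨-, hmem⟩
      simp only [projX_apply, hzdef, WithLp.equiv_symm_apply, WithLp.toLp_fst] at hmem
      have h1 : f (a • x) ≤ a := by
        calc f (a • x) ≤ ‖f (a • x)‖ := le_abs_self _
        _ ≤ ‖f‖ * ‖a • x‖ := f.le_opNorm _
        _ = a := by rw [hf, norm_smul, Real.norm_eq_abs, abs_of_pos ha, hx]; ring
      linarith
    obtain ⟨w', ⟨hw'ball, hw'sl⟩, hw'dist⟩ :=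
      hnab (projX f) β (projX_norm f hf) hβ0 hz_not (a * ε / 2) hε'0
    rw [projX_apply] at hw'sl
    set u := w'.fst with hu
    set v := w'.snd with hv
    have huv : ‖u‖ + ‖v‖ ≤ 1 := by rw [← L1norm]; exact hw'ball
    have hfu_le : f u ≤ ‖u‖ := by
      calc f u ≤ ‖f u‖ := le_abs_self _
      _ ≤ ‖f‖ * ‖u‖ := f.le_opNorm _
      _ = ‖u‖ := by rw [hf, one_mul]
    have hau : a ≤ ‖u‖ := by linarith
    have hu0 : 0 < ‖u‖ := lt_of_lt_of_le ha hau
    have hdist : 2 - a * ε / 2 < ‖a • x - u‖ + ‖b • y - v‖ := by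
      rw [L1norm] at hw'dist
      simp only [WithLp.sub_fst, WithLp.sub_snd, hzdef, WithLp.equiv_symm_apply, WithLp.toLp_fst,
        WithLp.equiv_symm_apply, WithLp.toLp_snd] at hw'dist
      exact hw'dist
    have hbyv : ‖b • y - v‖ ≤ b + ‖v‖ := by
      calc ‖b • y - v‖ ≤ ‖b • y‖ + ‖v‖ := norm_sub_le _ _
      _ = b + ‖v‖ := by rw [norm_smul, Real.norm_eq_abs, abs_of_pos hb, hy, mul_one]
    have key1 : a + ‖u‖ - a * ε / 2 < ‖a • x - u‖ := by linarith
    refine ⟨‖u‖⁻¹ • u, ⟨?_, ?_⟩, key_lemma ha hx hau hε key1⟩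
    · rw [norm_smul, Real.norm_eq_abs, abs_of_pos (by positivity),
        inv_mul_cancel₀ hu0.ne']
    · have hfu0 : 0 < f u := by linarith
      have hinv : (1 : ℝ) ≤ ‖u‖⁻¹ := by
        rw [le_inv_comm₀ one_pos hu0, inv_one]; linarith [norm_nonneg v]
      have : f (‖u‖⁻¹ • u) = ‖u‖⁻¹ * f u := by rw [map_smul, smul_eq_mul]
      rw [this]
      nlinarith
  · refine ⟨hy, ?_⟩
    intro f α hf hα ε hε
    set β := min α a with hβ
    have hβ0 : 0 < β := lt_min hα ha
    have hβa : β ≤ a := min_le_right _ _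
    have hβα : β ≤ α := min_le_left _ _
    have hε'0 : 0 < b * ε / 2 := by positivity
    have hz_not : z ∉ ballSlice (projY f) β := by
      rintro ⟨-, hmem⟩
      simp only [projY_apply, hzdef, WithLp.equiv_symm_apply, WithLp.toLp_snd] at hmem
      have h1 : f (b • y) ≤ b := by
        calc f (b • y) ≤ ‖f (b • y)‖ := le_abs_self _
        _ ≤ ‖f‖ * ‖b • y‖ := f.le_opNorm _
        _ = b := by rw [hf, norm_smul, Real.norm_eq_abs, abs_of_pos hb, hy]; ring
      linarith
    obtain ⟨w', ⟨hw'ball, hw'sl⟩, hw'dist⟩ :=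
      hnab (projY f) β (projY_norm f hf) hβ0 hz_not (b * ε / 2) hε'0
    rw [projY_apply] at hw'sl
    set u := w'.snd with hu
    set v := w'.fst with hv
    have huv : ‖v‖ + ‖u‖ ≤ 1 := by rw [← L1norm]; exact hw'ball
    have hfu_le : f u ≤ ‖u‖ := by
      calc f u ≤ ‖f u‖ := le_abs_self _
      _ ≤ ‖f‖ * ‖u‖ := f.le_opNorm _
      _ = ‖u‖ := by rw [hf, one_mul]
    have hau : b ≤ ‖u‖ := by linarith
    have hu0 : 0 < ‖u‖ := lt_of_lt_of_le hb hau
    have hdist : 2 - b * ε / 2 < ‖a • x - v‖ + ‖b • y - u‖ := by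
      rw [L1norm] at hw'dist
      simp only [WithLp.sub_fst, WithLp.sub_snd, hzdef, WithLp.equiv_symm_apply, WithLp.toLp_fst,
        WithLp.equiv_symm_apply, WithLp.toLp_snd] at hw'dist
      exact hw'dist
    have hbyv : ‖a • x - v‖ ≤ a + ‖v‖ := by
      calc ‖a • x - v‖ ≤ ‖a • x‖ + ‖v‖ := norm_sub_le _ _
      _ = a + ‖v‖ := by rw [norm_smul, Real.norm_eq_abs, abs_of_pos ha, hx, mul_one]
    have key1 : b + ‖u‖ - b * ε / 2 < ‖b • y - u‖ := by linarith
    refine ⟨‖u‖⁻¹ • u, ⟨?_, ?_⟩, key_lemma hb hy hau hε key1⟩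
    · rw [norm_smul, Real.norm_eq_abs, abs_of_pos (by positivity),
        inv_mul_cancel₀ hu0.ne']
    · have hfu0 : 0 < f u := by linarith
      have hinv : (1 : ℝ) ≤ ‖u‖⁻¹ := by
        rw [le_inv_comm₀ one_pos hu0, inv_one]; linarith [norm_nonneg v]
      have : f (‖u‖⁻¹ • u) = ‖u‖⁻¹ * f u := by rw [map_smul, smul_eq_mul]
      rw [this]
      nlinarith
end

section
/- Let K be an infinite compact Hausdorff space. If f ∈ S_{C(K)} does not attain its norm at an accumulation point of K, then f is not a ∇-point of B_{C(K)}. -/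
open scoped ENNReal

variable {X : Type*} [NormedAddCommGroup X] [NormedSpace ℝ X]

open Filter Finset

section aux
variable {K : Type*} [TopologicalSpace K] [CompactSpace K] [T2Space K]

lemma singleton_nhds_of_not_accPt {x : K} (hx : ¬ AccPt x (Filter.principal Set.univ)) :
    {x} ∈ nhds x := by
  rw [accPt_iff_nhds] at hx
  push_neg at hx
  obtain ⟨U, hU, hU2⟩ := hx
  exact Filter.mem_of_superset hU (fun y hy => hU2 y ⟨hy, trivial⟩)

lemma finite_of_forall_singleton_nhds {F : Set K} (hFc : IsClosed F)
    (hiso : ∀ x ∈ F, {x} ∈ nhds x) : F.Finite := by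
  have hcomp : IsCompact F := hFc.isCompact
  obtain ⟨t, -, ht⟩ := hcomp.elim_nhds_subcover (fun x => ({x} : Set K)) hiso
  exact (t.finite_toSet.biUnion (fun x _ => Set.finite_singleton x)).subset ht

end aux

set_option maxHeartbeats 1600000 in
/-- If `K` is an infinite compact Hausdorff space and `f ∈ S_{C(K)}` does not attain its norm
at an accumulation point of `K`, then `f` is not a `∇`-point of the unit ball of `C(K)`. -/
theorem not_isNablaPoint_of_norm_attained_only_at_isolated
    {K : Type*} [TopologicalSpace K] [CompactSpace K] [T2Space K] [Infinite K]
    (f : C(K, ℝ)) (hf : ‖f‖ = 1)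
    (h : ∀ x : K, |f x| = 1 → ¬ AccPt x (Filter.principal Set.univ)) :
    ¬ IsNablaPoint f := by
  classical
  rintro ⟨-, hN⟩
  set F : Set K := {x | |f x| = 1} with hFdef
  have hFc : IsClosed F := isClosed_eq ((map_continuous f).abs) continuous_const
  have hFfin : F.Finite := finite_of_forall_singleton_nhds hFc
    (fun x hx => singleton_nhds_of_not_accPt (h x hx))
  -- F is nonempty
  have hKne : Nonempty K := inferInstance
  obtain ⟨x₀, -, hx₀⟩ := isCompact_univ.exists_isMaxOn (Set.univ_nonempty)
    ((map_continuous f).abs.continuousOn)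
  have hx₀F : x₀ ∈ F := by
    have h1 : ‖f‖ ≤ |f x₀| := by
      apply (ContinuousMap.norm_le f (abs_nonneg _)).2
      intro t
      simpa [Real.norm_eq_abs] using hx₀ (Set.mem_univ t)
    have h2 : |f x₀| ≤ ‖f‖ := by
      simpa [Real.norm_eq_abs] using f.norm_coe_le_norm x₀
    simp only [hFdef, Set.mem_setOf_eq]
    linarith [hf ▸ h1, hf ▸ h2]
  -- complement of F
  have hFopen : IsOpen F := isOpen_iff_mem_nhds.2 fun x hx =>
    Filter.mem_of_superset (singleton_nhds_of_not_accPt (h x hx))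
      (Set.singleton_subset_iff.2 hx)
  have hVc : IsClosed (Fᶜ) := hFopen.isClosed_compl
  have hVne : (Fᶜ).Nonempty := by
    rcases Set.eq_empty_or_nonempty (Fᶜ) with he | hne
    · exfalso
      have : (Set.univ : Set K) ⊆ F := by
        intro x _
        by_contra hx
        exact Set.eq_empty_iff_forall_notMem.1 he x hx
      exact Set.infinite_univ (hFfin.subset this)
    · exact hne
  obtain ⟨t₀, ht₀V, ht₀max⟩ := hVc.isCompact.exists_isMaxOn hVne
    ((map_continuous f).abs.continuousOn)
  set m : ℝ := |f t₀| with hmdef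
  have hm1 : m < 1 := by
    have : t₀ ∉ F := ht₀V
    simp only [hFdef, Set.mem_setOf_eq] at this
    have hle : |f t₀| ≤ 1 := by
      have := f.norm_coe_le_norm t₀
      rw [hf] at this; simpa [Real.norm_eq_abs] using this
    exact lt_of_le_of_ne hle this
  have hmb : ∀ t : K, t ∉ F → |f t| ≤ m := fun t ht => ht₀max ht
  -- parameters
  set T : Finset K := hFfin.toFinset with hTdef
  have hTF : ∀ x, x ∈ T ↔ x ∈ F := fun x => hFfin.mem_toFinset
  set n : ℕ := T.card with hndef
  have hn1 : 1 ≤ n := Finset.card_pos.2 ⟨x₀, (hTF x₀).2 hx₀F⟩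
  set ε : ℝ := min ((1 - m)/2) (1/2) with hεdef
  have hε0 : 0 < ε := lt_min (by linarith) (by norm_num)
  have hεa : ε ≤ (1 - m)/2 := min_le_left _ _
  have hε2 : ε ≤ 1/2 := min_le_right _ _
  have hden : (0:ℝ) < (n:ℝ) + ε := add_pos_of_nonneg_of_pos (Nat.cast_nonneg n) hε0
  set lam : ℝ := 1/((n:ℝ) + ε) with hlamdef
  set lam0 : ℝ := ε/((n:ℝ) + ε) with hlam0def
  have hlam : 0 < lam := one_div_pos.2 hden
  have hlam0 : 0 < lam0 := div_pos hε0 hden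
  have hsum : (n:ℝ) * lam + lam0 = 1 := by
    rw [hlamdef, hlam0def]; field_simp
  have hlam0lam : lam0 = ε * lam := by
    rw [hlamdef, hlam0def]; field_simp
  set s : ℝ := if f t₀ ≤ 0 then (1:ℝ) else -1 with hsdef
  have hs1 : |s| = 1 := by rw [hsdef]; split_ifs <;> norm_num
  have hsft : s * f t₀ ≤ 0 := by
    rw [hsdef]; split_ifs with hc
    · linarith
    · nlinarith
  -- the functional
  have heval : ∀ (x : K) (g : C(K, ℝ)), ContinuousMap.evalCLM ℝ x g = g x := fun _ _ => rfl
  set φ : C(K, ℝ) →L[ℝ] ℝ :=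
    (∑ x ∈ T, (lam * f x) • ContinuousMap.evalCLM ℝ x) +
      (lam0 * s) • ContinuousMap.evalCLM ℝ t₀ with hφdef
  have hφapp : ∀ g : C(K, ℝ),
      φ g = (∑ x ∈ T, lam * f x * g x) + lam0 * s * g t₀ := by
    intro g
    simp [hφdef, ContinuousLinearMap.sum_apply, heval, mul_assoc]
  have hb : ∀ (g : C(K, ℝ)) (y : K), |g y| ≤ ‖g‖ := fun g y => by
    simpa [Real.norm_eq_abs] using g.norm_coe_le_norm y
  have hφle : ‖φ‖ ≤ 1 := by
    refine ContinuousLinearMap.opNorm_le_bound _ zero_le_one (fun g => ?_)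
    rw [Real.norm_eq_abs, hφapp, one_mul]
    have h1 : |(∑ x ∈ T, lam * f x * g x) + lam0 * s * g t₀|
        ≤ (∑ x ∈ T, |lam * f x * g x|) + |lam0 * s * g t₀| :=
      (abs_add_le _ _).trans (by gcongr; exact Finset.abs_sum_le_sum_abs _ _)
    have h2 : ∀ x ∈ T, |lam * f x * g x| ≤ lam * ‖g‖ := by
      intro x hx
      have hx1 : |f x| = 1 := (hTF x).1 hx
      rw [abs_mul, abs_mul, abs_of_pos hlam, hx1, mul_one]
      exact mul_le_mul_of_nonneg_left (hb g x) hlam.le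
    have h3 : |lam0 * s * g t₀| ≤ lam0 * ‖g‖ := by
      rw [abs_mul, abs_mul, abs_of_pos hlam0, hs1, mul_one]
      exact mul_le_mul_of_nonneg_left (hb g t₀) hlam0.le
    have h4 : (∑ x ∈ T, |lam * f x * g x|) ≤ (n:ℝ) * (lam * ‖g‖) := by
      calc (∑ x ∈ T, |lam * f x * g x|) ≤ ∑ _x ∈ T, lam * ‖g‖ := Finset.sum_le_sum h2
        _ = (n:ℝ) * (lam * ‖g‖) := by rw [Finset.sum_const, nsmul_eq_mul, hndef]
    calc |(∑ x ∈ T, lam * f x * g x) + lam0 * s * g t₀|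
        ≤ (n:ℝ) * (lam * ‖g‖) + lam0 * ‖g‖ := by linarith
      _ = ((n:ℝ) * lam + lam0) * ‖g‖ := by ring
      _ = ‖g‖ := by rw [hsum, one_mul]
  -- the witness function showing ‖φ‖ ≥ 1
  have hwcont : Continuous (fun t : K => if |f t| = 1 then f t else s) := by
    rw [continuous_iff_continuousAt]
    intro t
    by_cases ht : |f t| = 1
    · have hnp : nhds t ≤ pure t := le_pure_iff.2 (singleton_nhds_of_not_accPt (h t ht))
      exact (tendsto_pure_nhds _ t).mono_left hnp
    · have htF : t ∈ Fᶜ := by simpa [hFdef] using ht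
      have hev : (fun y : K => if |f y| = 1 then f y else s) =ᶠ[nhds t] (fun _ => s) := by
        filter_upwards [hFc.isOpen_compl.mem_nhds htF] with y hy
        exact if_neg (by simpa [hFdef] using hy)
      exact (continuousAt_congr hev).2 continuousAt_const
  set w : C(K, ℝ) := ⟨fun t => if |f t| = 1 then f t else s, hwcont⟩ with hwdef
  have hwapp : ∀ t : K, w t = if |f t| = 1 then f t else s := fun _ => rfl
  have hw1 : ‖w‖ ≤ 1 := by
    refine (ContinuousMap.norm_le _ zero_le_one).2 (fun t => ?_)
    rw [Real.norm_eq_abs, hwapp]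
    split_ifs with ht
    · rw [ht]
    · rw [hs1]
  have hφw : φ w = 1 := by
    rw [hφapp]
    have h1 : ∀ x ∈ T, lam * f x * w x = lam := by
      intro x hx
      have hx1 : |f x| = 1 := (hTF x).1 hx
      rw [hwapp, if_pos hx1]
      rcases (abs_eq one_pos.le).1 hx1 with h1 | h1 <;> rw [h1] <;> ring
    have hwt₀ : w t₀ = s := by
      rw [hwapp]
      exact if_neg (by simpa [hFdef] using ht₀V)
    have hss : s * s = 1 := by
      rcases (abs_eq one_pos.le).1 hs1 with h1 | h1 <;> rw [h1] <;> ring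
    rw [Finset.sum_congr rfl h1, Finset.sum_const, nsmul_eq_mul, hwt₀]
    have hsumT : (T.card : ℝ) * lam + lam0 = 1 := hsum
    linear_combination lam0 * hss + hsumT
  have hφ1 : ‖φ‖ = 1 := by
    refine le_antisymm hφle ?_
    have h1 : |φ w| ≤ ‖φ‖ * ‖w‖ := by
      simpa [Real.norm_eq_abs] using φ.le_opNorm w
    rw [hφw] at h1
    calc (1:ℝ) ≤ ‖φ‖ * ‖w‖ := (le_abs_self _).trans h1
      _ ≤ ‖φ‖ * 1 := mul_le_mul_of_nonneg_left hw1 (norm_nonneg φ)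
      _ = ‖φ‖ := mul_one _
  -- f is not in the slice
  set α : ℝ := lam0/2 with hαdef
  have hα : 0 < α := half_pos hlam0
  have hφf : φ f ≤ 1 - lam0 := by
    rw [hφapp]
    have h1 : ∀ x ∈ T, lam * f x * f x = lam := by
      intro x hx
      have hx1 : |f x| = 1 := (hTF x).1 hx
      rcases (abs_eq one_pos.le).1 hx1 with h1 | h1 <;> rw [h1] <;> ring
    rw [Finset.sum_congr rfl h1, Finset.sum_const, nsmul_eq_mul]
    have h2 : lam0 * s * f t₀ ≤ 0 := by
      rw [mul_assoc]
      exact mul_nonpos_of_nonneg_of_nonpos hlam0.le hsft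
    have hsumT : (T.card : ℝ) * lam + lam0 = 1 := hsum
    linarith
  have hfnot : f ∉ ballSlice φ α := by
    rintro ⟨-, hlt⟩
    rw [hαdef] at hlt
    linarith
  -- apply the nabla property and derive a contradiction
  obtain ⟨g, ⟨hg1, hg2⟩, hgd⟩ := hN φ α hφ1 hα hfnot ε hε0
  have hgb : ∀ y : K, |g y| ≤ 1 := fun y => (hb g y).trans hg1
  have key : ∀ x ∈ T, 1 - ε/2 ≤ f x * g x := by
    intro x hx
    have hsplit : lam * f x * g x + ∑ y ∈ T.erase x, lam * f y * g y
        = ∑ y ∈ T, lam * f y * g y := Finset.add_sum_erase T (fun y => lam * f y * g y) hx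
    have hcard : ∑ _y ∈ T.erase x, lam = (n:ℝ) * lam - lam := by
      have h2 : lam + ∑ _y ∈ T.erase x, lam = ∑ _y ∈ T, lam :=
        Finset.add_sum_erase T (fun _ => lam) hx
      have h3 : ∑ _y ∈ T, lam = (n:ℝ) * lam := by
        rw [Finset.sum_const, nsmul_eq_mul]
      linarith
    have hrest : ∑ y ∈ T.erase x, lam * f y * g y ≤ (n:ℝ) * lam - lam := by
      have h2 : ∀ y ∈ T.erase x, lam * f y * g y ≤ lam := by
        intro y hy
        have hy1 : |f y| = 1 := (hTF y).1 (Finset.mem_of_mem_erase hy)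
        have habs : |lam * f y * g y| ≤ lam := by
          rw [abs_mul, abs_mul, abs_of_pos hlam, hy1, mul_one]
          nlinarith [hgb y]
        exact (le_abs_self _).trans habs
      have h3 := Finset.sum_le_sum h2
      rw [hcard] at h3
      exact h3
    have hlast : lam0 * s * g t₀ ≤ lam0 := by
      have habs : |lam0 * s * g t₀| ≤ lam0 := by
        rw [abs_mul, abs_mul, abs_of_pos hlam0, hs1, mul_one]
        nlinarith [hgb t₀]
      exact (le_abs_self _).trans habs
    have hg2' : 1 - lam0/2 < (∑ y ∈ T, lam * f y * g y) + lam0 * s * g t₀ := by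
      rw [← hφapp g]; exact hg2
    have hstep : lam * (1 - ε/2) ≤ lam * (f x * g x) := by
      linarith [hg2', hsplit, hrest, hlast, hsum, hlam0lam]
    exact le_of_mul_le_mul_left hstep hlam
  have hfg : ‖f - g‖ ≤ 2 - ε := by
    refine (ContinuousMap.norm_le _ (by linarith)).2 (fun t => ?_)
    rw [ContinuousMap.coe_sub, Pi.sub_apply, Real.norm_eq_abs]
    by_cases ht : t ∈ F
    · have ht1 : |f t| = 1 := ht
      have hkey := key t ((hTF t).2 ht)
      have hsmall : |f t - g t| ≤ ε/2 := by
        rcases (abs_eq one_pos.le).1 ht1 with h1 | h1 <;> rw [h1] at hkey ⊢ <;>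
          [skip; rw [neg_one_mul] at hkey] <;>
          exact abs_le.2 ⟨by linarith [abs_le.1 (hgb t)], by linarith [abs_le.1 (hgb t)]⟩
      linarith
    · have hft : |f t| ≤ m := hmb t ht
      have h2 : m ≤ 1 - 2*ε := by linarith
      refine abs_le.2 ⟨?_, ?_⟩ <;>
        [linarith [abs_le.1 hft, abs_le.1 (hgb t)]; linarith [abs_le.1 hft, abs_le.1 (hgb t)]]
  linarith
end

section
/- If x is a Daugavet point in a Banach space X, then for every slice S of B_X and every ε > 0, there exists y ∈ S with ‖x+y‖ ≥ 2-ε and ‖x-y‖ ≥ 2-ε. -/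
open scoped ENNReal

variable {X : Type*} [NormedAddCommGroup X] [NormedSpace ℝ X]

/-- If `x` is a Daugavet point, then for every slice `S` of `B_X` and every `ε > 0` there is
`y ∈ S` with `‖x + y‖ ≥ 2 - ε` and `‖x - y‖ ≥ 2 - ε`. -/
theorem IsDaugavetPoint.exists_symmetric
    {X : Type*} [NormedAddCommGroup X] [NormedSpace ℝ X] [CompleteSpace X]
    {x : X} (hx : IsDaugavetPoint x) (f : X →L[ℝ] ℝ) (α : ℝ) (hf : ‖f‖ = 1) (hα : 0 < α)
    {ε : ℝ} (hε : 0 < ε) :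
    ∃ y ∈ ballSlice f α, 2 - ε ≤ ‖x + y‖ ∧ 2 - ε ≤ ‖x - y‖ := by
  set δ : ℝ := min (min (α / 3) (ε / 4)) (1 / 2) with hδdef
  have hδ : 0 < δ := by positivity
  have hδα : 3 * δ ≤ α := by
    have := min_le_left (min (α / 3) (ε / 4)) (1 / 2)
    have := le_trans this (min_le_left _ _)
    linarith
  have hδε : 4 * δ ≤ ε := by
    have := le_trans (min_le_left (min (α / 3) (ε / 4)) (1 / 2)) (min_le_right _ _)
    linarith
  have hδhalf : δ ≤ 1 / 2 := min_le_right _ _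
  -- Step 1: find y₁ in the slice with ‖x + y₁‖ > 2 - δ, via the slice of -f
  obtain ⟨z, hz, hxz⟩ := hx.2 (-f) δ (by rw [norm_neg, hf]) hδ δ hδ
  set y₁ : X := -z with hy₁def
  have hy₁norm : ‖y₁‖ ≤ 1 := by simpa [hy₁def] using hz.1
  have hfy₁ : 1 - δ < f y₁ := by
    have := hz.2
    simpa [hy₁def] using this
  have hxy₁ : 2 - δ < ‖x + y₁‖ := by
    have : x - z = x + y₁ := by simp [hy₁def, sub_eq_add_neg]
    rwa [this] at hxz
  have hxy₁pos : x + y₁ ≠ 0 := by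
    intro h
    rw [h, norm_zero] at hxy₁
    linarith
  -- Step 2: choose a norming functional g for x + y₁
  obtain ⟨g, hg, hgval⟩ := exists_dual_vector ℝ (x + y₁) (norm_ne_zero_iff.mpr hxy₁pos)
  have hgsum : 2 - δ < g x + g y₁ := by
    have h1 : g x + g y₁ = ‖x + y₁‖ := by
      rw [← map_add]; exact_mod_cast hgval
    linarith [hxy₁, h1.ge, h1.le]
  have hgx1 : g x ≤ 1 := by
    calc g x ≤ ‖g x‖ := le_abs_self _
    _ ≤ ‖g‖ * ‖x‖ := g.le_opNorm x
    _ = 1 := by rw [hg, hx.1]; ring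
  have hgy₁1 : g y₁ ≤ 1 := by
    calc g y₁ ≤ ‖g y₁‖ := le_abs_self _
    _ ≤ ‖g‖ * ‖y₁‖ := g.le_opNorm y₁
    _ ≤ 1 := by rw [hg]; simpa using hy₁norm
  have hgx : 1 - δ < g x := by linarith
  -- Step 3: form h = f + g, normalize it
  set h : X →L[ℝ] ℝ := f + g with hhdef
  have hfy₁1 : f y₁ ≤ 1 := by
    calc f y₁ ≤ ‖f y₁‖ := le_abs_self _
    _ ≤ ‖f‖ * ‖y₁‖ := f.le_opNorm y₁
    _ ≤ 1 := by rw [hf]; simpa using hy₁norm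
  have hhy₁ : 2 - 2 * δ < h y₁ := by
    have : h y₁ = f y₁ + g y₁ := by rw [hhdef, ContinuousLinearMap.add_apply]
    rw [this]; linarith
  have hhnorm_lb : 2 - 2 * δ < ‖h‖ := by
    calc 2 - 2 * δ < h y₁ := hhy₁
    _ ≤ ‖h y₁‖ := le_abs_self _
    _ ≤ ‖h‖ * ‖y₁‖ := h.le_opNorm y₁
    _ ≤ ‖h‖ := by nlinarith [norm_nonneg h, hy₁norm]
  have hhpos : 0 < ‖h‖ := by linarith
  have hhne : ‖h‖ ≠ 0 := ne_of_gt hhpos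
  set h₀ : X →L[ℝ] ℝ := ‖h‖⁻¹ • h with hh₀def
  have hh₀norm : ‖h₀‖ = 1 := by
    have hns := norm_smul (‖h‖⁻¹) h
    rw [hh₀def, hns, norm_inv, norm_norm, inv_mul_cancel₀ hhne]
  have hhle2 : ‖h‖ ≤ 2 := by
    calc ‖h‖ ≤ ‖f‖ + ‖g‖ := norm_add_le f g
    _ = 2 := by rw [hf, hg]; ring
  -- Step 4: apply the Daugavet property to the slice S(h₀, δ/2)
  obtain ⟨y, hy, hxy⟩ := hx.2 h₀ (δ / 2) hh₀norm (by positivity) ε hε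
  have hynorm : ‖y‖ ≤ 1 := hy.1
  have hhy : 2 - 3 * δ < h y := by
    have h1 : 1 - δ / 2 < h₀ y := hy.2
    have h2 : h₀ y = ‖h‖⁻¹ * h y := by
      rw [hh₀def, ContinuousLinearMap.smul_apply, smul_eq_mul]
    rw [h2] at h1
    have h3 : ‖h‖ * (1 - δ / 2) < h y := by
      have := mul_lt_mul_of_pos_left h1 hhpos
      rwa [← mul_assoc, mul_inv_cancel₀ hhne, one_mul] at this
    have h4 : (2 - 2 * δ) * (1 - δ / 2) < ‖h‖ * (1 - δ / 2) := by
      apply mul_lt_mul_of_pos_right hhnorm_lb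
      linarith
    have h5 : (2 - 2 * δ) * (1 - δ / 2) = 2 - 3 * δ + δ * δ := by ring
    have h6 : 0 ≤ δ * δ := mul_self_nonneg δ
    linarith
  have hfy1 : f y ≤ 1 := by
    calc f y ≤ ‖f y‖ := le_abs_self _
    _ ≤ ‖f‖ * ‖y‖ := f.le_opNorm y
    _ ≤ 1 := by rw [hf]; simpa using hynorm
  have hgy1 : g y ≤ 1 := by
    calc g y ≤ ‖g y‖ := le_abs_self _
    _ ≤ ‖g‖ * ‖y‖ := g.le_opNorm y
    _ ≤ 1 := by rw [hg]; simpa using hynorm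
  have hhy_split : h y = f y + g y := by rw [hhdef, ContinuousLinearMap.add_apply]
  have hfy : 1 - 3 * δ < f y := by rw [hhy_split] at hhy; linarith
  have hgy : 1 - 3 * δ < g y := by rw [hhy_split] at hhy; linarith
  refine ⟨y, ⟨hynorm, by linarith⟩, ?_, le_of_lt hxy⟩
  have : 2 - 4 * δ < g x + g y := by linarith
  calc 2 - ε ≤ 2 - 4 * δ := by linarith
  _ ≤ g x + g y := le_of_lt this
  _ = g (x + y) := (map_add g x y).symm
  _ ≤ ‖g (x + y)‖ := le_abs_self _
  _ ≤ ‖g‖ * ‖x + y‖ := g.le_opNorm _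
  _ = ‖x + y‖ := by rw [hg, one_mul]
end

section
/- Let X and Y be Banach spaces. If x ∈ S_X is a Daugavet point and y ∈ S_Y is a ∇-point, then the elementary tensor x ⊗ y is a Daugavet point in the projective tensor product X ⊗̂_π Y. -/
open scoped ENNReal

variable {X : Type*} [NormedAddCommGroup X] [NormedSpace ℝ X]

/-- `m : X →L[ℝ] Y →L[ℝ] Z` realizes `Z` as the projective tensor product `X ⊗̂_π Y`:
the closed unit ball of `Z` is the closed convex hull of the elementary tensors of the unit
balls, and every bounded bilinear form on `X × Y` lifts to a functional on `Z` of the same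
norm. -/
structure IsProjTensorProduct
    {X Y Z : Type*} [NormedAddCommGroup X] [NormedSpace ℝ X]
    [NormedAddCommGroup Y] [NormedSpace ℝ Y]
    [NormedAddCommGroup Z] [NormedSpace ℝ Z]
    (m : X →L[ℝ] Y →L[ℝ] Z) : Prop where
  ball_eq : Metric.closedBall (0 : Z) 1 =
    closure (convexHull ℝ {z : Z | ∃ x y, ‖x‖ ≤ 1 ∧ ‖y‖ ≤ 1 ∧ z = m x y})
  lift : ∀ B : X →L[ℝ] Y →L[ℝ] ℝ, ∃ g : Z →L[ℝ] ℝ, ‖g‖ = ‖B‖ ∧ ∀ x y, g (m x y) = B x y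

section Helpers

variable {X' Y' Z' : Type*} [NormedAddCommGroup X'] [NormedSpace ℝ X']
  [NormedAddCommGroup Y'] [NormedSpace ℝ Y']
  [NormedAddCommGroup Z'] [NormedSpace ℝ Z']

/-- In a projective tensor product, elementary tensors satisfy the cross-norm upper bound. -/
lemma IsProjTensorProduct.norm_apply_le {m : X' →L[ℝ] Y' →L[ℝ] Z'}
    (hm : IsProjTensorProduct m) (a : X') (b : Y') : ‖m a b‖ ≤ ‖a‖ * ‖b‖ := by
  rcases eq_or_ne a 0 with rfl | ha
  · simp
  rcases eq_or_ne b 0 with rfl | hb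
  · simp
  have h1 : m (‖a‖⁻¹ • a) (‖b‖⁻¹ • b) ∈ Metric.closedBall (0 : Z') 1 := by
    rw [hm.ball_eq]
    exact subset_closure (subset_convexHull ℝ _
      ⟨‖a‖⁻¹ • a, ‖b‖⁻¹ • b, le_of_eq (norm_smul_inv_norm ha),
        le_of_eq (norm_smul_inv_norm hb), rfl⟩)
  have h2 : m (‖a‖⁻¹ • a) (‖b‖⁻¹ • b) = (‖a‖⁻¹ * ‖b‖⁻¹) • m a b := by
    rw [map_smul]
    simp [map_smul, smul_smul, mul_comm]
  rw [mem_closedBall_zero_iff, h2, norm_smul] at h1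
  have hna : (0:ℝ) < ‖a‖ := norm_pos_iff.mpr ha
  have hnb : (0:ℝ) < ‖b‖ := norm_pos_iff.mpr hb
  have habs : |‖a‖⁻¹ * ‖b‖⁻¹| = ‖a‖⁻¹ * ‖b‖⁻¹ := abs_of_pos (by positivity)
  rw [Real.norm_eq_abs, habs] at h1
  calc ‖m a b‖ = (‖a‖ * ‖b‖) * ((‖a‖⁻¹ * ‖b‖⁻¹) * ‖m a b‖) := by
        field_simp
      _ ≤ (‖a‖ * ‖b‖) * 1 := by
        have : (0:ℝ) ≤ ‖a‖ * ‖b‖ := by positivity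
        exact mul_le_mul_of_nonneg_left h1 this
      _ = ‖a‖ * ‖b‖ := mul_one _

/-- Lift a product of functionals to a norm-at-most-one functional on the tensor product. -/
lemma IsProjTensorProduct.exists_dual_pair {m : X' →L[ℝ] Y' →L[ℝ] Z'}
    (hm : IsProjTensorProduct m) (f : X' →L[ℝ] ℝ) (g : Y' →L[ℝ] ℝ)
    (hf : ‖f‖ ≤ 1) (hg : ‖g‖ ≤ 1) :
    ∃ G : Z' →L[ℝ] ℝ, ‖G‖ ≤ 1 ∧ ∀ a b, G (m a b) = f a * g b := by
  obtain ⟨G, hG, hGab⟩ := hm.lift (f.smulRight g)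
  refine ⟨G, ?_, fun a b => ?_⟩
  · rw [hG, ContinuousLinearMap.norm_smulRight_apply]
    exact mul_le_one₀ hf (norm_nonneg g) hg
  · rw [hGab]
    simp [ContinuousLinearMap.smulRight_apply]

/-- Every slice of the unit ball of a projective tensor product contains an elementary
tensor of elements of the unit balls. -/
lemma IsProjTensorProduct.exists_tensor_in_slice {m : X' →L[ℝ] Y' →L[ℝ] Z'}
    (hm : IsProjTensorProduct m) (G : Z' →L[ℝ] ℝ) (hG : ‖G‖ = 1)
    {δ : ℝ} (hδ : 0 < δ) :
    ∃ u v, ‖u‖ ≤ 1 ∧ ‖v‖ ≤ 1 ∧ 1 - δ < G (m u v) := by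
  obtain ⟨z, hz1, hz2⟩ := G.exists_lt_apply_of_lt_opNorm (r := 1 - δ) (by rw [hG]; linarith)
  have hz' : ∃ z', ‖z'‖ ≤ 1 ∧ 1 - δ < G z' := by
    rcases le_or_gt 0 (G z) with h | h
    · exact ⟨z, hz1.le, by rwa [Real.norm_eq_abs, abs_of_nonneg h] at hz2⟩
    · refine ⟨-z, by simpa using hz1.le, ?_⟩
      rw [map_neg]
      rwa [Real.norm_eq_abs, abs_of_neg h] at hz2
  obtain ⟨z', hz'1, hz'2⟩ := hz'
  by_contra hcon
  push_neg at hcon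
  have hconv : Convex ℝ {w : Z' | G w ≤ 1 - δ} := by
    intro w hw w' hw' s t hs ht hst
    simp only [Set.mem_setOf_eq, map_add, map_smul, smul_eq_mul] at *
    nlinarith
  have hclosed : IsClosed {w : Z' | G w ≤ 1 - δ} :=
    isClosed_le G.continuous continuous_const
  have hsub : Metric.closedBall (0:Z') 1 ⊆ {w : Z' | G w ≤ 1 - δ} := by
    rw [hm.ball_eq]
    refine closure_minimal (convexHull_min ?_ hconv) hclosed
    rintro w ⟨a, b, ha, hb, rfl⟩
    exact hcon a b ha hb
  have := hsub (mem_closedBall_zero_iff.mpr hz'1)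
  simp only [Set.mem_setOf_eq] at this
  linarith

end Helpers

set_option maxHeartbeats 2000000

/-- If `x ∈ S_X` is a Daugavet point and `y ∈ S_Y` is a `∇`-point, then the elementary tensor
`x ⊗ y` is a Daugavet point in the projective tensor product `X ⊗̂_π Y`. -/
theorem isDaugavetPoint_tmul_of_daugavet_nabla
    {X Y Z : Type*} [NormedAddCommGroup X] [NormedSpace ℝ X] [CompleteSpace X]
    [NormedAddCommGroup Y] [NormedSpace ℝ Y] [CompleteSpace Y]
    [NormedAddCommGroup Z] [NormedSpace ℝ Z] [CompleteSpace Z]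
    (m : X →L[ℝ] Y →L[ℝ] Z) (hm : IsProjTensorProduct m)
    {x : X} {y : Y} (hx : IsDaugavetPoint x) (hy : IsNablaPoint y) :
    IsDaugavetPoint (m x y) := by
  obtain ⟨hx1, hxD⟩ := hx
  obtain ⟨hy1, hyN⟩ := hy
  have hxne : x ≠ 0 := by
    intro h; rw [h, norm_zero] at hx1; norm_num at hx1
  have hyne : y ≠ 0 := by
    intro h; rw [h, norm_zero] at hy1; norm_num at hy1
  constructor
  · -- norm of the elementary tensor is one
    have hle : ‖m x y‖ ≤ 1 := by
      have := hm.norm_apply_le x y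
      rw [hx1, hy1] at this; linarith
    have hge : (1:ℝ) ≤ ‖m x y‖ := by
      obtain ⟨f, hf1, hfx⟩ := exists_dual_vector ℝ x (norm_ne_zero_iff.mpr hxne)
      obtain ⟨g, hg1, hgy⟩ := exists_dual_vector ℝ y (norm_ne_zero_iff.mpr hyne)
      obtain ⟨G, hGle, hGab⟩ := hm.exists_dual_pair f g hf1.le hg1.le
      have h1 : G (m x y) = 1 := by
        rw [hGab]
        have hfx' : f x = 1 := by rw [← hx1]; exact_mod_cast hfx
        have hgy' : g y = 1 := by rw [← hy1]; exact_mod_cast hgy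
        rw [hfx', hgy', one_mul]
      calc (1:ℝ) = G (m x y) := h1.symm
        _ ≤ ‖G (m x y)‖ := Real.le_norm_self _
        _ ≤ ‖G‖ * ‖m x y‖ := G.le_opNorm _
        _ ≤ 1 * ‖m x y‖ := mul_le_mul_of_nonneg_right hGle (norm_nonneg _)
        _ = ‖m x y‖ := one_mul _
    linarith
  · intro G α hG hα ε hε
    set δ : ℝ := min α 1 / 8 with hδdef
    have hδ : 0 < δ := by
      have : 0 < min α 1 := lt_min hα one_pos
      positivity
    have hδ8 : 8 * δ ≤ 1 := by
      have : min α 1 ≤ 1 := min_le_right _ _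
      rw [hδdef]; linarith
    have hδα : 8 * δ ≤ α := by
      have : min α 1 ≤ α := min_le_left _ _
      rw [hδdef]; linarith
    set ε' : ℝ := min ε 1 / 4 with hε'def
    have hε' : 0 < ε' := by
      have : 0 < min ε 1 := lt_min hε one_pos
      positivity
    have hε'4 : 4 * ε' ≤ 1 := by
      have : min ε 1 ≤ 1 := min_le_right _ _
      rw [hε'def]; linarith
    have hε'ε : 4 * ε' ≤ ε := by
      have : min ε 1 ≤ ε := min_le_left _ _
      rw [hε'def]; linarith
    obtain ⟨u, v, hu, hv, huv⟩ := hm.exists_tensor_in_slice G hG hδ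
    -- the functional ψ b = G (m u b)
    set ψ : Y →L[ℝ] ℝ := G.comp (m u) with hψdef
    have hψb : ∀ b, ψ b = G (m u b) := fun b => rfl
    have hψ_le : ‖ψ‖ ≤ 1 := by
      refine ContinuousLinearMap.opNorm_le_bound _ zero_le_one (fun b => ?_)
      have h1 : ‖G (m u b)‖ ≤ ‖G‖ * ‖m u b‖ := G.le_opNorm _
      have h2 : ‖m u b‖ ≤ ‖u‖ * ‖b‖ := hm.norm_apply_le u b
      have h3 : ‖u‖ * ‖b‖ ≤ 1 * ‖b‖ :=
        mul_le_mul_of_nonneg_right hu (norm_nonneg b)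
      rw [hψb]
      rw [hG] at h1
      linarith
    have hψv : 1 - δ < ψ v := huv
    have hψnorm : 1 - δ < ‖ψ‖ := by
      have h1 : ψ v ≤ ‖ψ v‖ := Real.le_norm_self _
      have h2 : ‖ψ v‖ ≤ ‖ψ‖ * ‖v‖ := ψ.le_opNorm v
      have h3 : ‖ψ‖ * ‖v‖ ≤ ‖ψ‖ * 1 :=
        mul_le_mul_of_nonneg_left hv (norm_nonneg ψ)
      linarith
    have hψpos : 0 < ‖ψ‖ := by linarith
    set ψh : Y →L[ℝ] ℝ := ‖ψ‖⁻¹ • ψ with hψhdef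
    have hψh_apply : ∀ b, ψh b = ‖ψ‖⁻¹ * ψ b := fun b => rfl
    have hψh_norm : ‖ψh‖ = 1 := by
      have h2 := norm_smul (α := ℝ) (‖ψ‖⁻¹) ψ
      rw [hψhdef, h2, Real.norm_eq_abs, abs_of_pos (inv_pos.mpr hψpos),
        inv_mul_cancel₀ (ne_of_gt hψpos)]
    by_cases hycase : y ∈ ballSlice ψh δ
    · -- Case A : y is in the slice generated by ψh
      obtain ⟨-, hy2⟩ := hycase
      have hψy : (1 - δ) * ‖ψ‖ < ψ y := by
        rw [hψh_apply] at hy2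
        calc (1 - δ) * ‖ψ‖ < (‖ψ‖⁻¹ * ψ y) * ‖ψ‖ :=
              mul_lt_mul_of_pos_right hy2 hψpos
          _ = ψ y := by field_simp
      have hGuy : 1 - 2*δ < G (m u y) := by
        rw [← hψb]
        have e1 : (1-δ)*(1-δ) < (1-δ)*‖ψ‖ :=
          mul_lt_mul_of_pos_left hψnorm (by linarith)
        have e2 : (1-δ)*(1-δ) = 1 - 2*δ + δ*δ := by ring
        have e3 : 0 ≤ δ*δ := mul_self_nonneg δ
        linarith
      -- the functional φ a = G (m a y)
      set φ : X →L[ℝ] ℝ := G.comp (m.flip y) with hφdef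
      have hφa : ∀ a, φ a = G (m a y) := fun a => by
        simp [hφdef, ContinuousLinearMap.flip_apply]
      have hφ_le : ‖φ‖ ≤ 1 := by
        refine ContinuousLinearMap.opNorm_le_bound _ zero_le_one (fun a => ?_)
        have h1 : ‖G (m a y)‖ ≤ ‖G‖ * ‖m a y‖ := G.le_opNorm _
        have h2 : ‖m a y‖ ≤ ‖a‖ * ‖y‖ := hm.norm_apply_le a y
        rw [hG] at h1
        rw [hy1] at h2
        have : φ a = G (m a y) := hφa a
        rw [this]
        linarith
      have hφnorm : 1 - 2*δ < ‖φ‖ := by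
        have h1 : φ u ≤ ‖φ u‖ := Real.le_norm_self _
        have h2 : ‖φ u‖ ≤ ‖φ‖ * ‖u‖ := φ.le_opNorm u
        have h3 : ‖φ‖ * ‖u‖ ≤ ‖φ‖ * 1 :=
          mul_le_mul_of_nonneg_left hu (norm_nonneg φ)
        have h4 := hφa u
        linarith [hGuy, h4 ▸ h1]
      have hφpos : 0 < ‖φ‖ := by linarith
      set φh : X →L[ℝ] ℝ := ‖φ‖⁻¹ • φ with hφhdef
      have hφh_norm : ‖φh‖ = 1 := by
        have h2 := norm_smul (α := ℝ) (‖φ‖⁻¹) φ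
        rw [hφhdef, h2, Real.norm_eq_abs, abs_of_pos (inv_pos.mpr hφpos),
          inv_mul_cancel₀ (ne_of_gt hφpos)]
      obtain ⟨u', ⟨hu'1, hu'2⟩, hxu'⟩ := hxD φh δ hφh_norm hδ ε' hε'
      have hφu' : (1 - δ) * ‖φ‖ < φ u' := by
        have : φh u' = ‖φ‖⁻¹ * φ u' := rfl
        rw [this] at hu'2
        calc (1 - δ) * ‖φ‖ < (‖φ‖⁻¹ * φ u') * ‖φ‖ :=
              mul_lt_mul_of_pos_right hu'2 hφpos
          _ = φ u' := by field_simp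
      have hGz : 1 - α < G (m u' y) := by
        rw [← hφa]
        have e1 : (1-δ)*(1-2*δ) < (1-δ)*‖φ‖ :=
          mul_lt_mul_of_pos_left hφnorm (by linarith)
        have e2 : (1-δ)*(1-2*δ) = 1 - 3*δ + 2*(δ*δ) := by ring
        have e3 : 0 ≤ δ*δ := mul_self_nonneg δ
        linarith
      refine ⟨m u' y, ⟨?_, hGz⟩, ?_⟩
      · have h1 : ‖m u' y‖ ≤ ‖u'‖ * ‖y‖ := hm.norm_apply_le u' y
        rw [hy1] at h1
        linarith
      · -- distance estimate
        have hxu'ne : x - u' ≠ 0 := by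
          intro h
          rw [h, norm_zero] at hxu'
          linarith
        obtain ⟨f, hf1, hfx⟩ := exists_dual_vector ℝ (x - u') (norm_ne_zero_iff.mpr hxu'ne)
        obtain ⟨g, hg1, hgy⟩ := exists_dual_vector ℝ y (norm_ne_zero_iff.mpr hyne)
        obtain ⟨G₀, hG₀, hG₀ab⟩ := hm.exists_dual_pair f g hf1.le hg1.le
        have hdiff : m x y - m u' y = m (x - u') y := by
          rw [map_sub]; rfl
        have hval : G₀ (m x y - m u' y) = ‖x - u'‖ := by
          rw [hdiff, hG₀ab]
          have hfx' : f (x - u') = ‖x - u'‖ := by exact_mod_cast hfx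
          have hgy' : g y = 1 := by rw [← hy1]; exact_mod_cast hgy
          rw [hfx', hgy', mul_one]
        have hfin : ‖x - u'‖ ≤ ‖m x y - m u' y‖ := by
          calc ‖x - u'‖ = G₀ (m x y - m u' y) := hval.symm
            _ ≤ ‖G₀ (m x y - m u' y)‖ := Real.le_norm_self _
            _ ≤ ‖G₀‖ * ‖m x y - m u' y‖ := G₀.le_opNorm _
            _ ≤ 1 * ‖m x y - m u' y‖ :=
                mul_le_mul_of_nonneg_right hG₀ (norm_nonneg _)
            _ = ‖m x y - m u' y‖ := one_mul _
        linarith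
    · -- Case B : y is not in the slice; use the ∇-point property
      obtain ⟨v', ⟨hv'1, hv'2⟩, hyv'⟩ := hyN ψh δ hψh_norm hδ hycase ε' hε'
      have hψv' : (1 - δ) * ‖ψ‖ < ψ v' := by
        rw [hψh_apply] at hv'2
        calc (1 - δ) * ‖ψ‖ < (‖ψ‖⁻¹ * ψ v') * ‖ψ‖ :=
              mul_lt_mul_of_pos_right hv'2 hψpos
          _ = ψ v' := by field_simp
      have hGuv' : 1 - 2*δ < G (m u v') := by
        rw [← hψb]
        have e1 : (1-δ)*(1-δ) < (1-δ)*‖ψ‖ :=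
          mul_lt_mul_of_pos_left hψnorm (by linarith)
        have e2 : (1-δ)*(1-δ) = 1 - 2*δ + δ*δ := by ring
        have e3 : 0 ≤ δ*δ := mul_self_nonneg δ
        linarith
      -- the functional χ a = G (m a v')
      set χ : X →L[ℝ] ℝ := G.comp (m.flip v') with hχdef
      have hχa : ∀ a, χ a = G (m a v') := fun a => by
        simp [hχdef, ContinuousLinearMap.flip_apply]
      have hχ_le : ‖χ‖ ≤ 1 := by
        refine ContinuousLinearMap.opNorm_le_bound _ zero_le_one (fun a => ?_)
        have h1 : ‖G (m a v')‖ ≤ ‖G‖ * ‖m a v'‖ := G.le_opNorm _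
        have h2 : ‖m a v'‖ ≤ ‖a‖ * ‖v'‖ := hm.norm_apply_le a v'
        have h3 : ‖a‖ * ‖v'‖ ≤ ‖a‖ * 1 :=
          mul_le_mul_of_nonneg_left hv'1 (norm_nonneg a)
        rw [hG] at h1
        have : χ a = G (m a v') := hχa a
        rw [this]
        linarith
      have hχnorm : 1 - 2*δ < ‖χ‖ := by
        have h1 : χ u ≤ ‖χ u‖ := Real.le_norm_self _
        have h2 : ‖χ u‖ ≤ ‖χ‖ * ‖u‖ := χ.le_opNorm u
        have h3 : ‖χ‖ * ‖u‖ ≤ ‖χ‖ * 1 :=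
          mul_le_mul_of_nonneg_left hu (norm_nonneg χ)
        have h4 := hχa u
        linarith [hGuv', h4 ▸ h1]
      have hχpos : 0 < ‖χ‖ := by linarith
      set η : X →L[ℝ] ℝ := -(‖χ‖⁻¹ • χ) with hηdef
      have hη_norm : ‖η‖ = 1 := by
        have h2 := norm_smul (α := ℝ) (‖χ‖⁻¹) χ
        rw [hηdef, norm_neg, h2, Real.norm_eq_abs, abs_of_pos (inv_pos.mpr hχpos),
          inv_mul_cancel₀ (ne_of_gt hχpos)]
      obtain ⟨w, ⟨hw1, hw2⟩, hxw⟩ := hxD η δ hη_norm hδ ε' hε'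
      have hηw : η w = -(‖χ‖⁻¹ * χ w) := by
        simp [hηdef]
      have hχw : χ (-w) > (1 - δ) * ‖χ‖ := by
        rw [hηw] at hw2
        have : ‖χ‖⁻¹ * χ w < -(1 - δ) := by linarith
        have h5 : χ w < -(1 - δ) * ‖χ‖ := by
          calc χ w = (‖χ‖⁻¹ * χ w) * ‖χ‖ := by field_simp
            _ < -(1 - δ) * ‖χ‖ := mul_lt_mul_of_pos_right this hχpos
        rw [map_neg]
        linarith
      have hGz : 1 - α < G (m (-w) v') := by
        rw [← hχa]
        have e1 : (1-δ)*(1-2*δ) < (1-δ)*‖χ‖ :=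
          mul_lt_mul_of_pos_left hχnorm (by linarith)
        have e2 : (1-δ)*(1-2*δ) = 1 - 3*δ + 2*(δ*δ) := by ring
        have e3 : 0 ≤ δ*δ := mul_self_nonneg δ
        linarith [hχw]
      refine ⟨m (-w) v', ⟨?_, hGz⟩, ?_⟩
      · have h1 : ‖m (-w) v'‖ ≤ ‖-w‖ * ‖v'‖ := hm.norm_apply_le (-w) v'
        rw [norm_neg] at h1
        have h2 : ‖w‖ * ‖v'‖ ≤ 1 := mul_le_one₀ hw1 (norm_nonneg _) hv'1
        linarith
      · -- distance estimate in the mixed case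
        have hxwnorm : 2 - ε' < ‖x + -w‖ := by
          rw [← sub_eq_add_neg]; exact hxw
        have hxwne : x + -w ≠ 0 := by
          intro h
          rw [h, norm_zero] at hxwnorm
          linarith
        have hyv'ne : y - v' ≠ 0 := by
          intro h
          rw [h, norm_zero] at hyv'
          linarith
        obtain ⟨f, hf1, hfx⟩ := exists_dual_vector ℝ (x + -w) (norm_ne_zero_iff.mpr hxwne)
        obtain ⟨g, hg1, hgy⟩ := exists_dual_vector ℝ (y - v') (norm_ne_zero_iff.mpr hyv'ne)
        obtain ⟨G₀, hG₀, hG₀ab⟩ := hm.exists_dual_pair f g hf1.le hg1.le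
        -- bounds on the values of f and g
        have hfsum : f x + f (-w) = ‖x + -w‖ := by
          rw [← map_add]; exact_mod_cast hfx
        have hfxb : ‖f x‖ ≤ 1 := by
          have := f.le_opNorm x
          rwa [hf1, one_mul, hx1] at this
        have hfwb : ‖f (-w)‖ ≤ 1 := by
          have := f.le_opNorm (-w)
          rw [hf1, one_mul, norm_neg] at this
          linarith
        have hfx1 : 1 - ε' < f x := by
          have h1 : f (-w) ≤ 1 := le_trans (Real.le_norm_self _) hfwb
          linarith
        have hfw1 : 1 - ε' < f (-w) := by
          have h1 : f x ≤ 1 := le_trans (Real.le_norm_self _) hfxb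
          linarith
        have hgsum : g y - g v' = ‖y - v'‖ := by
          rw [← map_sub]; exact_mod_cast hgy
        have hgyb : ‖g y‖ ≤ 1 := by
          have := g.le_opNorm y
          rwa [hg1, one_mul, hy1] at this
        have hgv'b : ‖g v'‖ ≤ 1 := by
          have := g.le_opNorm v'
          rw [hg1, one_mul] at this
          linarith
        have hgy1 : 1 - ε' < g y := by
          have h1 : -(1:ℝ) ≤ g v' := by
            have := neg_abs_le (g v')
            rw [← Real.norm_eq_abs] at this
            linarith
          linarith
        have hgv'1 : g v' < -(1 - ε') := by
          have h1 : g y ≤ 1 := le_trans (Real.le_norm_self _) hgyb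
          linarith
        have hdiff : m x y - m (-w) v' = m x y - m (-w) v' := rfl
        have hval : G₀ (m x y - m (-w) v') = f x * g y - f (-w) * g v' := by
          rw [map_sub, hG₀ab, hG₀ab]
        have hbig : 2 - ε < f x * g y - f (-w) * g v' := by
          have hpos : (0:ℝ) < 1 - ε' := by linarith
          have h1 : (1 - ε') * (1 - ε') < f x * g y :=
            mul_lt_mul' hfx1.le hgy1 hpos.le (lt_trans hpos hfx1)
          have h2 : (1 - ε') * (1 - ε') < f (-w) * (-(g v')) :=
            mul_lt_mul' hfw1.le (by linarith) hpos.le (lt_trans hpos hfw1)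
          have h3 : f (-w) * (-(g v')) = -(f (-w) * g v') := by ring
          have h4 : (1 - ε') * (1 - ε') = 1 - 2*ε' + ε'*ε' := by ring
          have h5 : 0 ≤ ε'*ε' := mul_self_nonneg ε'
          rw [h3] at h2
          linarith
        have hfin : f x * g y - f (-w) * g v' ≤ ‖m x y - m (-w) v'‖ := by
          calc f x * g y - f (-w) * g v' = G₀ (m x y - m (-w) v') := hval.symm
            _ ≤ ‖G₀ (m x y - m (-w) v')‖ := Real.le_norm_self _
            _ ≤ ‖G₀‖ * ‖m x y - m (-w) v'‖ := G₀.le_opNorm _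
            _ ≤ 1 * ‖m x y - m (-w) v'‖ :=
                mul_le_mul_of_nonneg_right hG₀ (norm_nonneg _)
            _ = ‖m x y - m (-w) v'‖ := one_mul _
        linarith
end

section
/- Let X and Y be Banach spaces. If x ∈ S_X is a super Δ-point, then x ⊗ y is a super Δ-point in X ⊗̂_π Y for every y ∈ S_Y. -/
open scoped ENNReal

variable {X : Type*} [NormedAddCommGroup X] [NormedSpace ℝ X]

/-- `x` is a super `Δ`-point: for every relatively weakly open subset `V` of `B_X`
containing `x`, `sup_{y ∈ V} ‖x - y‖ = 2`. -/
def IsSuperDeltaPoint {X : Type*} [NormedAddCommGroup X] [NormedSpace ℝ X] (x : X) : Prop :=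
  ‖x‖ = 1 ∧ ∀ U : Set (WeakSpace ℝ X), IsOpen U → toWeakSpace ℝ X x ∈ U →
    ∀ ε > (0 : ℝ), ∃ y : X, ‖y‖ ≤ 1 ∧ toWeakSpace ℝ X y ∈ U ∧ 2 - ε < ‖x - y‖

section Aux

variable {X Y Z : Type*} [NormedAddCommGroup X] [NormedSpace ℝ X]
    [NormedAddCommGroup Y] [NormedSpace ℝ Y]
    [NormedAddCommGroup Z] [NormedSpace ℝ Z]

theorem aux_upper (m : X →L[ℝ] Y →L[ℝ] Z)
    (hm : Metric.closedBall (0 : Z) 1 =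
      closure (convexHull ℝ {z : Z | ∃ x y, ‖x‖ ≤ 1 ∧ ‖y‖ ≤ 1 ∧ z = m x y}))
    {u : X} {v : Y} (hu : ‖u‖ ≤ 1) (hv : ‖v‖ ≤ 1) : ‖m u v‖ ≤ 1 := by
  have h1 : m u v ∈ Metric.closedBall (0 : Z) 1 := by
    rw [hm]
    exact subset_closure (subset_convexHull ℝ _ ⟨u, v, hu, hv, rfl⟩)
  simpa using h1

theorem aux_lower (m : X →L[ℝ] Y →L[ℝ] Z)
    (hlift : ∀ B : X →L[ℝ] Y →L[ℝ] ℝ, ∃ g : Z →L[ℝ] ℝ, ‖g‖ = ‖B‖ ∧ ∀ x y, g (m x y) = B x y)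
    (w : X) {v : Y} (hv : ‖v‖ = 1) : ‖w‖ ≤ ‖m w v‖ := by
  rcases eq_or_ne w 0 with rfl | hw
  · simp
  have hv0 : v ≠ 0 := by intro h; rw [h] at hv; simp at hv
  obtain ⟨f, hf1, hfw⟩ := exists_dual_vector ℝ w (norm_ne_zero_iff.mpr hw)
  obtain ⟨g, hg1, hgv⟩ := exists_dual_vector ℝ v (norm_ne_zero_iff.mpr hv0)
  obtain ⟨h, hh1, hh2⟩ := hlift (f.smulRight g)
  have hnorm : ‖h‖ = 1 := by
    rw [hh1, ContinuousLinearMap.norm_smulRight_apply, hf1, hg1, one_mul]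
  have : h (m w v) = ‖w‖ := by
    rw [hh2]
    simp [hfw, hgv, hv]
  calc ‖w‖ = h (m w v) := this.symm
    _ ≤ ‖h (m w v)‖ := le_abs_self _
    _ ≤ ‖h‖ * ‖m w v‖ := h.le_opNorm _
    _ = ‖m w v‖ := by rw [hnorm, one_mul]
end Aux


theorem isSuperDeltaPoint_tmul'
    {X Y Z : Type*} [NormedAddCommGroup X] [NormedSpace ℝ X] [CompleteSpace X]
    [NormedAddCommGroup Y] [NormedSpace ℝ Y] [CompleteSpace Y]
    [NormedAddCommGroup Z] [NormedSpace ℝ Z] [CompleteSpace Z]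
    (m : X →L[ℝ] Y →L[ℝ] Z) (hm : Metric.closedBall (0 : Z) 1 =
      closure (convexHull ℝ {z : Z | ∃ x y, ‖x‖ ≤ 1 ∧ ‖y‖ ≤ 1 ∧ z = m x y}))
    (hlift : ∀ B : X →L[ℝ] Y →L[ℝ] ℝ, ∃ g : Z →L[ℝ] ℝ, ‖g‖ = ‖B‖ ∧ ∀ x y, g (m x y) = B x y)
    {x : X} (hx1 : ‖x‖ = 1)
    (hx2 : ∀ U : Set (WeakSpace ℝ X), IsOpen U → toWeakSpace ℝ X x ∈ U →
      ∀ ε > (0 : ℝ), ∃ y : X, ‖y‖ ≤ 1 ∧ toWeakSpace ℝ X y ∈ U ∧ 2 - ε < ‖x - y‖)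
    (y : Y) (hy : ‖y‖ = 1) :
    ‖m x y‖ = 1 ∧ ∀ U : Set (WeakSpace ℝ Z), IsOpen U → toWeakSpace ℝ Z (m x y) ∈ U →
      ∀ ε > (0 : ℝ), ∃ z : Z, ‖z‖ ≤ 1 ∧ toWeakSpace ℝ Z z ∈ U ∧ 2 - ε < ‖m x y - z‖ := by
  constructor
  · refine le_antisymm (aux_upper m hm hx1.le hy.le) ?_
    calc (1:ℝ) = ‖x‖ := hx1.symm
      _ ≤ ‖m x y‖ := aux_lower m hlift x hy
  · intro U hU hmem ε hε
    set T : X →L[ℝ] Z := m.flip y with hT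
    have hTx : ∀ u : X, T u = m u y := fun u => rfl
    set U' : Set (WeakSpace ℝ X) := (WeakSpace.map T) ⁻¹' U with hU'
    have hU'open : IsOpen U' := hU.preimage (WeakSpace.map T).continuous
    have hxU' : toWeakSpace ℝ X x ∈ U' := hmem
    obtain ⟨u, hu1, hu2, hu3⟩ := hx2 U' hU'open hxU' (min ε 1) (lt_min hε one_pos)
    refine ⟨m u y, aux_upper m hm hu1 hy.le, hu2, ?_⟩
    have h1 : ‖x - u‖ ≤ ‖m x y - m u y‖ := by
      have := aux_lower m hlift (x - u) hy
      simpa [map_sub] using this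
    calc 2 - ε ≤ 2 - min ε 1 := by have := min_le_left ε 1; linarith
      _ < ‖x - u‖ := hu3
      _ ≤ ‖m x y - m u y‖ := h1

/-- If `x ∈ S_X` is a super `Δ`-point, then `x ⊗ y` is a super `Δ`-point in the projective
tensor product `X ⊗̂_π Y` for every `y ∈ S_Y`. -/
theorem isSuperDeltaPoint_tmul
    {X Y Z : Type*} [NormedAddCommGroup X] [NormedSpace ℝ X] [CompleteSpace X]
    [NormedAddCommGroup Y] [NormedSpace ℝ Y] [CompleteSpace Y]
    [NormedAddCommGroup Z] [NormedSpace ℝ Z] [CompleteSpace Z]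
    (m : X →L[ℝ] Y →L[ℝ] Z) (hm : IsProjTensorProduct m)
    {x : X} (hx : IsSuperDeltaPoint x) (y : Y) (hy : ‖y‖ = 1) :
    IsSuperDeltaPoint (m x y) :=
  isSuperDeltaPoint_tmul' m hm.ball_eq hm.lift hx.1 hx.2 y hy
end

section
/- Let X and Y be Banach spaces. If x ∈ S_X and y ∈ S_Y are ∇-points, then ‖x⊗y - z‖ = 2 for every denting point z of the unit ball of X ⊗̂_π Y with z ≠ x⊗y. -/
open scoped ENNReal

variable {X : Type*} [NormedAddCommGroup X] [NormedSpace ℝ X]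

section Aux

variable {W : Type*} [NormedAddCommGroup W] [NormedSpace ℝ W]

/-- From a norm-one functional, find a unit vector with large value. -/
lemma exists_unit_gt (g : W →L[ℝ] ℝ) (hg : ‖g‖ = 1) {r : ℝ} (hr : r < 1) :
    ∃ w : W, ‖w‖ ≤ 1 ∧ r < g w := by
  have h1 : max r 0 < ‖g‖ := by rw [hg]; exact max_lt hr one_pos
  obtain ⟨w, hw1, hw2⟩ := g.exists_lt_apply_of_lt_opNorm h1
  rcases le_or_gt 0 (g w) with h | h
  · refine ⟨w, hw1.le, ?_⟩
    have : max r 0 < |g w| := hw2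
    rw [abs_of_nonneg h] at this
    exact lt_of_le_of_lt (le_max_left _ _) this
  · refine ⟨-w, by simpa using hw1.le, ?_⟩
    have : max r 0 < |g w| := hw2
    rw [abs_of_neg h] at this
    rw [map_neg]
    exact lt_of_le_of_lt (le_max_left _ _) this

end Aux

section Aux2

variable {X Y Z : Type*} [NormedAddCommGroup X] [NormedSpace ℝ X]
    [NormedAddCommGroup Y] [NormedSpace ℝ Y]
    [NormedAddCommGroup Z] [NormedSpace ℝ Z]
    {m : X →L[ℝ] Y →L[ℝ] Z}

lemma IsProjTensorProduct.norm_tmul_le (hm : IsProjTensorProduct m) (r : X) (s : Y) :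
    ‖m r s‖ ≤ ‖r‖ * ‖s‖ := by
  have hunit : ∀ u v, ‖u‖ ≤ 1 → ‖v‖ ≤ 1 → ‖m u v‖ ≤ 1 := by
    intro u v hu hv
    have : m u v ∈ Metric.closedBall (0 : Z) 1 := by
      rw [hm.ball_eq]
      exact subset_closure (subset_convexHull ℝ _ ⟨u, v, hu, hv, rfl⟩)
    simpa using this
  rcases eq_or_ne r 0 with rfl | hr
  · simp
  rcases eq_or_ne s 0 with rfl | hs
  · simp
  have hrn : (0:ℝ) < ‖r‖ := norm_pos_iff.mpr hr
  have hsn : (0:ℝ) < ‖s‖ := norm_pos_iff.mpr hs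
  have key : ‖m (‖r‖⁻¹ • r) (‖s‖⁻¹ • s)‖ ≤ 1 := by
    apply hunit
    · rw [norm_smul, norm_inv, norm_norm]; rw [inv_mul_cancel₀ hrn.ne']
    · rw [norm_smul, norm_inv, norm_norm]; rw [inv_mul_cancel₀ hsn.ne']
  have heq : m (‖r‖⁻¹ • r) (‖s‖⁻¹ • s) = (‖r‖⁻¹ * ‖s‖⁻¹) • m r s := by
    rw [map_smul]; simp [map_smul, smul_smul, mul_comm]
  rw [heq, norm_smul] at key
  have : |‖r‖⁻¹ * ‖s‖⁻¹| = ‖r‖⁻¹ * ‖s‖⁻¹ := abs_of_pos (by positivity)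
  rw [Real.norm_eq_abs, this] at key
  have h2 : ‖r‖ * ‖s‖ * (‖r‖⁻¹ * ‖s‖⁻¹ * ‖m r s‖) ≤ ‖r‖ * ‖s‖ * 1 := by
    apply mul_le_mul_of_nonneg_left key (by positivity)
  calc ‖m r s‖ = ‖r‖ * ‖s‖ * (‖r‖⁻¹ * ‖s‖⁻¹ * ‖m r s‖) := by
        field_simp
    _ ≤ ‖r‖ * ‖s‖ := by linarith

lemma IsProjTensorProduct.le_of_forall_tmul_le (hm : IsProjTensorProduct m)
    (g : Z →L[ℝ] ℝ) {c : ℝ} (hc : ∀ u v, ‖u‖ ≤ 1 → ‖v‖ ≤ 1 → g (m u v) ≤ c)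
    {w : Z} (hw : ‖w‖ ≤ 1) : g w ≤ c := by
  have hwmem : w ∈ Metric.closedBall (0 : Z) 1 := by simpa using hw
  rw [hm.ball_eq] at hwmem
  have hsub : closure (convexHull ℝ {z : Z | ∃ x y, ‖x‖ ≤ 1 ∧ ‖y‖ ≤ 1 ∧ z = m x y})
      ⊆ {w : Z | g w ≤ c} := by
    apply closure_minimal
    · apply convexHull_min
      · rintro _ ⟨u, v, hu, hv, rfl⟩
        exact hc u v hu hv
      · exact convex_halfSpace_le ⟨map_add g, map_smul g⟩ c
    · exact isClosed_le g.continuous continuous_const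
  exact hsub hwmem

lemma IsProjTensorProduct.exists_tmul_gt (hm : IsProjTensorProduct m)
    (g : Z →L[ℝ] ℝ) (hg : ‖g‖ = 1) {r : ℝ} (hr : r < 1) :
    ∃ u v, ‖u‖ ≤ 1 ∧ ‖v‖ ≤ 1 ∧ r < g (m u v) := by
  by_contra h
  push_neg at h
  obtain ⟨w, hw1, hw2⟩ := exists_unit_gt g hg hr
  exact absurd (hm.le_of_forall_tmul_le g (fun u v hu hv => h u v hu hv) hw1) (not_le.mpr hw2)

lemma IsProjTensorProduct.exists_functional (hm : IsProjTensorProduct m)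
    (φ : X →L[ℝ] ℝ) (ψ : Y →L[ℝ] ℝ) (hφ : ‖φ‖ ≤ 1) (hψ : ‖ψ‖ ≤ 1) :
    ∃ G : Z →L[ℝ] ℝ, ‖G‖ ≤ 1 ∧ ∀ r s, G (m r s) = φ r * ψ s := by
  obtain ⟨G, hG1, hG2⟩ := hm.lift (φ.smulRight ψ)
  refine ⟨G, ?_, fun r s => by rw [hG2]; simp, ⟩
  rw [hG1, ContinuousLinearMap.norm_smulRight_apply]
  nlinarith [norm_nonneg φ, norm_nonneg ψ]

end Aux2

section Aux3

variable {W : Type*} [NormedAddCommGroup W] [NormedSpace ℝ W]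

lemma exists_dual_real {w : W} (hw : w ≠ 0) :
    ∃ φ : W →L[ℝ] ℝ, ‖φ‖ = 1 ∧ φ w = ‖w‖ := by
  obtain ⟨φ, h1, h2⟩ := exists_dual_vector ℝ w (norm_ne_zero_iff.mpr hw)
  exact ⟨φ, h1, by simpa using h2⟩

lemma nabla_far {x : W} (hx : IsNablaPoint x) (f : W →L[ℝ] ℝ) {a b : ℝ}
    (hfl : a < ‖f‖) (ha : 0 < a) (hb : 0 < b) (hb1 : b < 1)
    (hfx : f x ≤ a * (1 - b)) {ε : ℝ} (hε : 0 < ε) :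
    ∃ u, ‖u‖ ≤ 1 ∧ a * (1 - b) < f u ∧ 2 - ε < ‖x - u‖ := by
  have hf0 : 0 < ‖f‖ := lt_trans ha hfl
  set ff : W →L[ℝ] ℝ := ‖f‖⁻¹ • f with hffdef
  have happ : ∀ r, ff r = ‖f‖⁻¹ * f r := fun r => by simp [hffdef]
  have hffn : ‖ff‖ = 1 := by
    have h' := norm_smul (‖f‖⁻¹) f
    rw [hffdef, h']
    simp [hf0.ne']
  have hxnot : x ∉ ballSlice ff b := by
    rintro ⟨-, hmem⟩
    rw [happ] at hmem
    have h2 : ‖f‖ * (1 - b) < f x := by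
      have := mul_lt_mul_of_pos_left hmem hf0
      rwa [← mul_assoc, mul_inv_cancel₀ hf0.ne', one_mul] at this
    nlinarith
  obtain ⟨u, ⟨hun, huS⟩, hufar⟩ := hx.2 ff b hffn hb hxnot ε hε
  refine ⟨u, hun, ?_, hufar⟩
  rw [happ] at huS
  have h2 : ‖f‖ * (1 - b) < f u := by
    have := mul_lt_mul_of_pos_left huS hf0
    rwa [← mul_assoc, mul_inv_cancel₀ hf0.ne', one_mul] at this
  nlinarith

lemma dual_pair_bounds {p q : W} (hp : ‖p‖ ≤ 1) (hq : ‖q‖ ≤ 1) {φ : W →L[ℝ] ℝ}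
    (hφ1 : ‖φ‖ = 1) (hφ2 : φ (p - q) = ‖p - q‖) {c : ℝ} (hfar : 2 - c < ‖p - q‖) :
    1 - c < φ p ∧ φ q < -(1 - c) := by
  have h1 : |φ p| ≤ 1 := by
    have := φ.le_opNorm p
    rw [hφ1, one_mul, Real.norm_eq_abs] at this
    linarith
  have h2 : |φ q| ≤ 1 := by
    have := φ.le_opNorm q
    rw [hφ1, one_mul, Real.norm_eq_abs] at this
    linarith
  have h3 : φ p - φ q = ‖p - q‖ := by rw [← map_sub, hφ2]
  obtain ⟨h1a, h1b⟩ := abs_le.mp h1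
  obtain ⟨h2a, h2b⟩ := abs_le.mp h2
  constructor <;> linarith

end Aux3

set_option maxHeartbeats 4000000 in
/-- If `x ∈ S_X` and `y ∈ S_Y` are `∇`-points, then `‖x ⊗ y - z‖ = 2` for every denting
point `z` of the unit ball of the projective tensor product `X ⊗̂_π Y` with `z ≠ x ⊗ y`. -/
theorem dist_tmul_denting_eq_two_of_nabla
    {X Y Z : Type*} [NormedAddCommGroup X] [NormedSpace ℝ X] [CompleteSpace X]
    [NormedAddCommGroup Y] [NormedSpace ℝ Y] [CompleteSpace Y]
    [NormedAddCommGroup Z] [NormedSpace ℝ Z] [CompleteSpace Z]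
    (m : X →L[ℝ] Y →L[ℝ] Z) (hm : IsProjTensorProduct m)
    {x : X} {y : Y} (hx : IsNablaPoint x) (hy : IsNablaPoint y)
    {z : Z} (hz : IsDentingPoint z) (hne : z ≠ m x y) :
    ‖m x y - z‖ = 2 := by
  obtain ⟨hx1, hx2⟩ := hx
  obtain ⟨hy1, hy2⟩ := hy
  obtain ⟨hz1, hz2⟩ := hz
  have hxne : x ≠ 0 := by intro h; rw [h, norm_zero] at hx1; norm_num at hx1
  have hyne : y ≠ 0 := by intro h; rw [h, norm_zero] at hy1; norm_num at hy1
  have hmxy : ‖m x y‖ ≤ 1 := by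
    have := hm.norm_tmul_le x y
    rw [hx1, hy1] at this; simpa using this
  have key : ∀ ε > (0:ℝ), 2 - ε < ‖m x y - z‖ := by
    intro ε hε
    have hD : 0 < ‖m x y - z‖ := by
      rw [norm_pos_iff, sub_ne_zero]
      exact fun h => hne h.symm
    set D := ‖m x y - z‖ with hDdef
    set ε₁ := min ε (min 1 D) / 8 with hε₁def
    have hε₁ : 0 < ε₁ := by
      have : 0 < min ε (min 1 D) := lt_min hε (lt_min one_pos hD)
      positivity
    have hε₁ε : ε₁ ≤ ε / 8 := by
      have := min_le_left ε (min 1 D); rw [hε₁def]; linarith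
    have hε₁1 : ε₁ ≤ 1/8 := by
      have h1 := min_le_right ε (min 1 D)
      have h2 := min_le_left (1:ℝ) D
      rw [hε₁def]; linarith
    have hε₁D : ε₁ ≤ D/8 := by
      have h1 := min_le_right ε (min 1 D)
      have h2 := min_le_right (1:ℝ) D
      rw [hε₁def]; linarith
    obtain ⟨g, α₀, hg, hα₀, hzS0, hdiam0⟩ := hz2 ε₁ hε₁
    -- improve the slice parameter
    obtain ⟨w, hw1, hw2⟩ := exists_unit_gt g hg (r := 1 - min α₀ ε₁)
      (by have : 0 < min α₀ ε₁ := lt_min hα₀ hε₁; linarith)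
    have hwS : w ∈ ballSlice g α₀ :=
      ⟨hw1, by have := min_le_left α₀ ε₁; linarith⟩
    have hzw : ‖z - w‖ < ε₁ := hdiam0 z hzS0 w hwS
    have hgz2 : 1 - 2*ε₁ < g z := by
      have h1 : g z = g w + g (z - w) := by rw [map_sub]; ring
      have h2 : |g (z - w)| ≤ ‖z - w‖ := by
        have := g.le_opNorm (z - w)
        rw [hg, one_mul, Real.norm_eq_abs] at this; exact this
      obtain ⟨h3, h4⟩ := abs_le.mp h2
      have h5 := min_le_right α₀ ε₁
      linarith
    set α := min α₀ (2*ε₁) with hαdef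
    have hα : 0 < α := lt_min hα₀ (by linarith)
    have hα14 : α ≤ 1/4 := le_trans (min_le_right _ _) (by linarith)
    have hzS : z ∈ ballSlice g α := by
      refine ⟨hz1, ?_⟩
      rcases min_choice α₀ (2*ε₁) with h | h <;> rw [hαdef, h] <;>
        [exact hzS0.2; linarith]
    have hdiam : ∀ p ∈ ballSlice g α, ∀ q ∈ ballSlice g α, ‖p - q‖ < ε₁ := by
      intro p hp q hq
      have hs : ∀ r, r ∈ ballSlice g α → r ∈ ballSlice g α₀ := by
        intro r hr
        refine ⟨hr.1, ?_⟩
        have := min_le_left α₀ (2*ε₁)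
        have := hr.2
        rw [hαdef] at this
        linarith [min_le_left α₀ (2*ε₁)]
      exact hdiam0 p (hs p hp) q (hs q hq)
    have hxyS : g (m x y) ≤ 1 - α := by
      by_contra h
      push_neg at h
      have hmem : m x y ∈ ballSlice g α := ⟨hmxy, h⟩
      have := hdiam _ hmem z hzS
      rw [← hDdef] at this
      linarith
    -- the two marginal functionals
    set f₂ : X →L[ℝ] ℝ := g.comp (m.flip y) with hf₂def
    set h₂ : Y →L[ℝ] ℝ := g.comp (m x) with hh₂def
    have hf₂app : ∀ r, f₂ r = g (m r y) := fun r => by simp [hf₂def]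
    have hh₂app : ∀ s, h₂ s = g (m x s) := fun s => by simp [hh₂def]
    have habs : ∀ w' : Z, |g w'| ≤ ‖w'‖ := by
      intro w'
      have := g.le_opNorm w'
      rw [hg, one_mul, Real.norm_eq_abs] at this; exact this
    have hf₂n : ‖f₂‖ ≤ 1 := by
      apply ContinuousLinearMap.opNorm_le_bound _ zero_le_one
      intro r
      rw [Real.norm_eq_abs, hf₂app]
      calc |g (m r y)| ≤ ‖m r y‖ := habs _
        _ ≤ ‖r‖ * ‖y‖ := hm.norm_tmul_le r y
        _ = 1 * ‖r‖ := by rw [hy1]; ring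
    have hh₂n : ‖h₂‖ ≤ 1 := by
      apply ContinuousLinearMap.opNorm_le_bound _ zero_le_one
      intro s
      rw [Real.norm_eq_abs, hh₂app]
      calc |g (m x s)| ≤ ‖m x s‖ := habs _
        _ ≤ ‖x‖ * ‖s‖ := hm.norm_tmul_le x s
        _ = 1 * ‖s‖ := by rw [hx1]
    -- final common step
    have final : ∀ p q, ‖p‖ ≤ 1 → ‖q‖ ≤ 1 → m p q ∈ ballSlice g α →
        ∀ (φ : X →L[ℝ] ℝ) (ψ : Y →L[ℝ] ℝ), ‖φ‖ ≤ 1 → ‖ψ‖ ≤ 1 → 2 - 4*ε₁ < φ x * ψ y - φ p * ψ q →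
        2 - ε < ‖m x y - z‖ := by
      intro p q hp hq hS φ ψ hφ hψ hval
      obtain ⟨G, hG1, hG2⟩ := hm.exists_functional φ ψ hφ hψ
      have hclose : ‖m p q - z‖ < ε₁ := hdiam _ hS z hzS
      have e2 : |G (m p q - z)| ≤ ‖m p q - z‖ := by
        have := G.le_opNorm (m p q - z)
        rw [Real.norm_eq_abs] at this
        nlinarith [norm_nonneg (m p q - z)]
      have e3 : G (m x y - z) ≤ ‖m x y - z‖ := by
        have := G.le_opNorm (m x y - z)
        rw [Real.norm_eq_abs] at this
        have := (abs_le.mp (by nlinarith [norm_nonneg (m x y - z)] :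
          |G (m x y - z)| ≤ ‖m x y - z‖)).2
        linarith
      have e4 : G (m x y - z) = G (m x y) - G (m p q) + G (m p q - z) := by
        rw [map_sub, map_sub]; ring
      rw [hG2, hG2] at e4
      obtain ⟨e2a, e2b⟩ := abs_le.mp e2
      rw [← hDdef] at e3 ⊢
      have h5 : 2 - 4*ε₁ - ε₁ < G (m x y - z) := by rw [e4]; linarith
      linarith
    by_cases hc1 : 1 - α/4 < ‖f₂‖
    · -- Case 1: use a slice of f₂ in X
      obtain ⟨u'', hu''n, hu''v, hu''far⟩ := nabla_far ⟨hx1, hx2⟩ f₂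
        (a := 1 - α/4) (b := α/2) hc1 (by linarith) (by linarith) (by linarith)
        (by rw [hf₂app]; nlinarith) hε₁
      have hgu : 1 - α < g (m u'' y) := by
        rw [← hf₂app]; nlinarith
      have hS : m u'' y ∈ ballSlice g α := by
        refine ⟨?_, hgu⟩
        calc ‖m u'' y‖ ≤ ‖u''‖ * ‖y‖ := hm.norm_tmul_le _ _
          _ ≤ 1 := by rw [hy1]; linarith
      have hxu : x - u'' ≠ 0 := by
        rw [← norm_pos_iff]; linarith
      obtain ⟨φ, hφ1, hφ2⟩ := exists_dual_real hxu
      obtain ⟨ψ, hψ1, hψ2⟩ := exists_dual_real hyne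
      refine final u'' y hu''n (le_of_eq hy1) hS φ ψ hφ1.le hψ1.le ?_
      have h3 : φ x - φ u'' = ‖x - u''‖ := by rw [← map_sub, hφ2]
      rw [hψ2, hy1]
      nlinarith
    by_cases hc2 : 1 - α/4 < ‖h₂‖
    · -- Case 2: use a slice of h₂ in Y
      obtain ⟨v'', hv''n, hv''v, hv''far⟩ := nabla_far ⟨hy1, hy2⟩ h₂
        (a := 1 - α/4) (b := α/2) hc2 (by linarith) (by linarith) (by linarith)
        (by rw [hh₂app]; nlinarith) hε₁
      have hgu : 1 - α < g (m x v'') := by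
        rw [← hh₂app]; nlinarith
      have hS : m x v'' ∈ ballSlice g α := by
        refine ⟨?_, hgu⟩
        calc ‖m x v''‖ ≤ ‖x‖ * ‖v''‖ := hm.norm_tmul_le _ _
          _ ≤ 1 := by rw [hx1]; linarith
      have hyv : y - v'' ≠ 0 := by
        rw [← norm_pos_iff]; linarith
      obtain ⟨φ, hφ1, hφ2⟩ := exists_dual_real hxne
      obtain ⟨ψ, hψ1, hψ2⟩ := exists_dual_real hyv
      refine final x v'' (le_of_eq hx1) hv''n hS φ ψ hφ1.le hψ1.le ?_
      have h3 : ψ y - ψ v'' = ‖y - v''‖ := by rw [← map_sub, hψ2]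
      rw [hφ2, hx1]
      nlinarith
    · -- Case 3: both marginals are small
      push_neg at hc1 hc2
      obtain ⟨u, v, hun, hvn, huv⟩ := hm.exists_tmul_gt g hg
        (r := 1 - α/16) (by linarith)
      set f : X →L[ℝ] ℝ := g.comp (m.flip v) with hfdef
      have hfapp : ∀ r, f r = g (m r v) := fun r => by simp [hfdef]
      have hfl : 1 - α/16 < ‖f‖ := by
        refine lt_of_lt_of_le huv ?_
        have h1 := f.le_opNorm u
        rw [Real.norm_eq_abs] at h1
        have h2 : |f u| ≤ ‖f‖ := by nlinarith [norm_nonneg f]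
        have h4 := (abs_le.mp h2).2
        rw [hfapp] at h4
        linarith
      have hfx : f x ≤ (1 - α/16) * (1 - α/16) := by
        have h1 : f x = h₂ v := by rw [hfapp, hh₂app]
        have h2 : |h₂ v| ≤ ‖h₂‖ := by
          have := h₂.le_opNorm v
          rw [Real.norm_eq_abs] at this
          nlinarith [norm_nonneg h₂]
        have := (abs_le.mp h2).2
        rw [h1]
        nlinarith
      obtain ⟨u', hu'n, hu'v, hu'far⟩ := nabla_far ⟨hx1, hx2⟩ f
        (a := 1 - α/16) (b := α/16) hfl (by linarith) (by linarith) (by linarith)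
        hfx hε₁
      -- second step in Y with the functional -g(m u' ·)
      set h : Y →L[ℝ] ℝ := -(g.comp (m u')) with hhdef
      have hhapp : ∀ s, h s = -(g (m u' s)) := fun s => by simp [hhdef]
      have hhl : 1 - α/8 < ‖h‖ := by
        have h1 : h v = -(g (m u' v)) := hhapp v
        have h2 : |h v| ≤ ‖h‖ := by
          have := h.le_opNorm v
          rw [Real.norm_eq_abs] at this
          nlinarith [norm_nonneg h]
        have h3 : g (m u' v) = f u' := (hfapp u').symm
        have := (abs_le.mp h2).1
        nlinarith
      have hhy : h y ≤ (1 - α/8) * (1 - α/16) := by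
        have h1 : g (m u' y) = f₂ u' := (hf₂app u').symm
        have h2 : |f₂ u'| ≤ ‖f₂‖ := by
          have := f₂.le_opNorm u'
          rw [Real.norm_eq_abs] at this
          nlinarith [norm_nonneg f₂]
        have := (abs_le.mp h2).1
        rw [hhapp, h1]
        nlinarith
      obtain ⟨w', hw'n, hw'v, hw'far⟩ := nabla_far ⟨hy1, hy2⟩ h
        (a := 1 - α/8) (b := α/16) hhl (by linarith) (by linarith) (by linarith)
        hhy hε₁
      have hguv : 1 - α < g (m u' (-w')) := by
        have h1 : g (m u' (-w')) = h w' := by rw [hhapp]; simp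
        rw [h1]; nlinarith
      have hS : m u' (-w') ∈ ballSlice g α := by
        refine ⟨?_, hguv⟩
        calc ‖m u' (-w')‖ ≤ ‖u'‖ * ‖-w'‖ := hm.norm_tmul_le _ _
          _ ≤ 1 * 1 := by
            apply mul_le_mul hu'n (by simpa using hw'n) (norm_nonneg _) zero_le_one
          _ = 1 := one_mul 1
      have hxu : x - u' ≠ 0 := by rw [← norm_pos_iff]; linarith
      have hyw : y - w' ≠ 0 := by rw [← norm_pos_iff]; linarith
      obtain ⟨φ, hφ1, hφ2⟩ := exists_dual_real hxu
      obtain ⟨ψ, hψ1, hψ2⟩ := exists_dual_real hyw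
      obtain ⟨hφx, hφu⟩ := dual_pair_bounds (le_of_eq hx1) hu'n hφ1 hφ2 hu'far
      obtain ⟨hψy, hψw⟩ := dual_pair_bounds (le_of_eq hy1) hw'n hψ1 hψ2 hw'far
      refine final u' (-w') hu'n (by simpa using hw'n) hS φ ψ hφ1.le hψ1.le ?_
      have h4 : ψ (-w') = -(ψ w') := by rw [map_neg]
      rw [h4]
      nlinarith
  refine le_antisymm ?_ ?_
  · calc ‖m x y - z‖ ≤ ‖m x y‖ + ‖z‖ := norm_sub_le _ _
      _ ≤ 2 := by linarith
  · by_contra hcon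
    push_neg at hcon
    have := key (2 - ‖m x y - z‖) (by linarith)
    linarith
end

section
/- Let X be a Banach space containing a complemented subspace Y, and suppose Y admits an equivalent norm with a Daugavet point. Then X admits an equivalent norm with a Daugavet point. -/
open scoped ENNReal

variable {X : Type*} [NormedAddCommGroup X] [NormedSpace ℝ X]

/-- A bundled real Banach space. -/
structure BanachSpaceBundle where
  carrier : Type
  [grp : NormedAddCommGroup carrier]
  [mod : NormedSpace ℝ carrier]
  [comp : CompleteSpace carrier]

attribute [instance] BanachSpaceBundle.grp BanachSpaceBundle.mod BanachSpaceBundle.comp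

section Aux

instance : Fact ((1:ℝ≥0∞) ≤ 1) := ⟨le_refl _⟩

variable {W Z : Type*} [NormedAddCommGroup W] [NormedSpace ℝ W]
  [NormedAddCommGroup Z] [NormedSpace ℝ Z]

omit [NormedSpace ℝ W] [NormedSpace ℝ Z] in
lemma withLp_one_norm (x : WithLp 1 (W × Z)) : ‖x‖ = ‖x.fst‖ + ‖x.snd‖ := by
  rw [WithLp.prod_norm_eq_add (by norm_num)]
  norm_num

lemma isDaugavetPoint_prod {w : W} (hw : IsDaugavetPoint w) :
    IsDaugavetPoint ((WithLp.equiv 1 (W × Z)).symm (w, 0)) := by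
  set E := WithLp.prodContinuousLinearEquiv 1 ℝ W Z with hE
  have hfst : ∀ (u : W) (z : Z), ((WithLp.equiv 1 (W × Z)).symm (u, z)).fst = u := fun _ _ => rfl
  have hsnd : ∀ (u : W) (z : Z), ((WithLp.equiv 1 (W × Z)).symm (u, z)).snd = z := fun _ _ => rfl
  have hnorm : ∀ (u : W) (z : Z), ‖(WithLp.equiv 1 (W × Z)).symm (u, z)‖ = ‖u‖ + ‖z‖ := by
    intro u z; rw [withLp_one_norm, hfst, hsnd]
  have hEsymm : ∀ (p : W × Z), E.symm p = (WithLp.equiv 1 (W × Z)).symm p := fun _ => rfl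
  constructor
  · rw [hnorm, hw.1, norm_zero, add_zero]
  intro f α hf hα ε hε
  set g : W →L[ℝ] ℝ := f.comp (E.symm.toContinuousLinearMap.comp (.inl ℝ W Z)) with hgdef
  set h : Z →L[ℝ] ℝ := f.comp (E.symm.toContinuousLinearMap.comp (.inr ℝ W Z)) with hhdef
  have hgap : ∀ u : W, g u = f ((WithLp.equiv 1 (W × Z)).symm (u, 0)) := fun u => rfl
  have hhap : ∀ z : Z, h z = f ((WithLp.equiv 1 (W × Z)).symm (0, z)) := fun z => rfl
  have hsplit : ∀ (u : W) (z : Z), f ((WithLp.equiv 1 (W × Z)).symm (u, z)) = g u + h z := by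
    intro u z
    have : ((WithLp.equiv 1 (W × Z)).symm (u, z)) =
        ((WithLp.equiv 1 (W × Z)).symm (u, 0)) + ((WithLp.equiv 1 (W × Z)).symm (0, z)) := by
      simp only [WithLp.equiv_symm_apply, ← WithLp.toLp_add]; simp
    rw [this, map_add, hgap, hhap]
  have hg_le : ‖g‖ ≤ 1 := by
    refine ContinuousLinearMap.opNorm_le_bound _ zero_le_one fun u => ?_
    rw [hgap]
    calc ‖f ((WithLp.equiv 1 (W × Z)).symm (u, 0))‖
        ≤ ‖f‖ * ‖(WithLp.equiv 1 (W × Z)).symm (u, (0 : Z))‖ := f.le_opNorm _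
      _ = 1 * ‖u‖ := by rw [hf, hnorm, norm_zero, add_zero]
  have hh_le : ‖h‖ ≤ 1 := by
    refine ContinuousLinearMap.opNorm_le_bound _ zero_le_one fun z => ?_
    rw [hhap]
    calc ‖f ((WithLp.equiv 1 (W × Z)).symm (0, z))‖
        ≤ ‖f‖ * ‖(WithLp.equiv 1 (W × Z)).symm ((0 : W), z)‖ := f.le_opNorm _
      _ = 1 * ‖z‖ := by rw [hf, hnorm, norm_zero, zero_add]
  have hf_le : ‖f‖ ≤ max ‖g‖ ‖h‖ := by
    refine ContinuousLinearMap.opNorm_le_bound _ (le_max_of_le_left (norm_nonneg g)) fun x => ?_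
    have hx : f x = g x.fst + h x.snd := hsplit x.fst x.snd
    have h1 : ‖g x.fst‖ ≤ ‖g‖ * ‖x.fst‖ := g.le_opNorm _
    have h2 : ‖h x.snd‖ ≤ ‖h‖ * ‖x.snd‖ := h.le_opNorm _
    have hgm : ‖g‖ ≤ max ‖g‖ ‖h‖ := le_max_left _ _
    have hhm : ‖h‖ ≤ max ‖g‖ ‖h‖ := le_max_right _ _
    calc ‖f x‖ ≤ ‖g x.fst‖ + ‖h x.snd‖ := by rw [hx]; exact norm_add_le _ _
      _ ≤ ‖g‖ * ‖x.fst‖ + ‖h‖ * ‖x.snd‖ := add_le_add h1 h2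
      _ ≤ max ‖g‖ ‖h‖ * ‖x.fst‖ + max ‖g‖ ‖h‖ * ‖x.snd‖ :=
          add_le_add (mul_le_mul_of_nonneg_right hgm (norm_nonneg _))
            (mul_le_mul_of_nonneg_right hhm (norm_nonneg _))
      _ = max ‖g‖ ‖h‖ * ‖x‖ := by rw [withLp_one_norm x]; ring
  set m : ℝ := min (min α ε) 1 with hm
  have hm0 : 0 < m := by positivity
  have hmα : m ≤ α := le_trans (min_le_left _ _) (min_le_left _ _)
  have hmε : m ≤ ε := le_trans (min_le_left _ _) (min_le_right _ _)
  have hm1 : m ≤ 1 := min_le_right _ _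
  by_cases hcase : 1 - m / 2 < ‖h‖
  · -- find z in the unit ball with h z > 1 - m
    have hz : ∃ z : Z, ‖z‖ ≤ 1 ∧ 1 - m < h z := by
      by_contra hcon
      push_neg at hcon
      have : ‖h‖ ≤ 1 - m := by
        refine ContinuousLinearMap.opNorm_le_bound _ (by linarith) fun z => ?_
        rcases eq_or_ne z 0 with rfl | hz0
        · simp
        · have hnz : (0:ℝ) < ‖z‖ := norm_pos_iff.mpr hz0
          have hu1 : ‖(‖z‖⁻¹ • z)‖ ≤ 1 := by
            rw [norm_smul, norm_inv, norm_norm, inv_mul_cancel₀ hnz.ne']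
          have hu2 : ‖(-(‖z‖⁻¹ • z))‖ ≤ 1 := by rwa [norm_neg]
          have e1 : h (‖z‖⁻¹ • z) ≤ 1 - m := hcon _ hu1
          have e2 : h (-(‖z‖⁻¹ • z)) ≤ 1 - m := hcon _ hu2
          rw [map_neg] at e2
          have habs : |h (‖z‖⁻¹ • z)| ≤ 1 - m := abs_le.mpr ⟨by linarith, e1⟩
          have : h (‖z‖⁻¹ • z) = ‖z‖⁻¹ * h z := by rw [map_smul]; rfl
          rw [this, abs_mul, abs_inv, abs_norm] at habs
          have hc : ‖z‖ * ‖z‖⁻¹ = 1 := mul_inv_cancel₀ hnz.ne'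
          have hmu := mul_le_mul_of_nonneg_left habs hnz.le
          rw [← mul_assoc, hc, one_mul] at hmu
          have : |h z| ≤ (1 - m) * ‖z‖ := by linarith [hmu, mul_comm (1 - m) ‖z‖]
          simpa [Real.norm_eq_abs] using this
      linarith
    obtain ⟨z, hz1, hz2⟩ := hz
    refine ⟨(WithLp.equiv 1 (W × Z)).symm (0, z), ⟨?_, ?_⟩, ?_⟩
    · rw [hnorm, norm_zero, zero_add]; exact hz1
    · rw [hsplit]
      have : g 0 = 0 := map_zero g
      rw [this, zero_add]
      linarith
    · have hsub : (WithLp.equiv 1 (W × Z)).symm (w, 0) -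
          (WithLp.equiv 1 (W × Z)).symm (0, z) = (WithLp.equiv 1 (W × Z)).symm (w, -z) := by
        simp only [WithLp.equiv_symm_apply, ← WithLp.toLp_sub]; simp
      rw [hsub, hnorm, hw.1, norm_neg]
      have hzn : 1 - m < ‖z‖ := by
        have h1' : h z ≤ ‖h‖ * ‖z‖ := le_trans (le_abs_self _) (h.le_opNorm z)
        have h2' : ‖h‖ * ‖z‖ ≤ 1 * ‖z‖ := mul_le_mul_of_nonneg_right hh_le (norm_nonneg z)
        linarith
      linarith
  · -- here ‖g‖ = 1
    push_neg at hcase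
    have hg1 : ‖g‖ = 1 := by
      have : (1:ℝ) ≤ max ‖g‖ ‖h‖ := hf ▸ hf_le
      rcases le_max_iff.mp this with hg | hh
      · linarith
      · linarith
    obtain ⟨u, ⟨hu1, hu2⟩, hu3⟩ := hw.2 g (m / 2) hg1 (by linarith) ε hε
    refine ⟨(WithLp.equiv 1 (W × Z)).symm (u, 0), ⟨?_, ?_⟩, ?_⟩
    · rw [hnorm, norm_zero, add_zero]; exact hu1
    · rw [hsplit, map_zero, add_zero]; linarith
    · have hsub : (WithLp.equiv 1 (W × Z)).symm (w, 0) -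
          (WithLp.equiv 1 (W × Z)).symm (u, 0) = (WithLp.equiv 1 (W × Z)).symm (w - u, 0) := by
        simp only [WithLp.equiv_symm_apply, ← WithLp.toLp_sub]; simp
      rw [hsub, hnorm, norm_zero, add_zero]
      exact hu3

end Aux

/-- If `X` contains a complemented subspace `Y` (witnessed by maps `j : Y → X` and
`P : X → Y` with `P ∘ j = id`), and `Y` admits an equivalent norm with a Daugavet point,
then `X` admits an equivalent norm with a Daugavet point. -/
theorem exists_renorming_with_daugavetPoint_of_complemented
    (X : Type) [NormedAddCommGroup X] [NormedSpace ℝ X] [CompleteSpace X]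
    (Y : Type) [NormedAddCommGroup Y] [NormedSpace ℝ Y] [CompleteSpace Y]
    (j : Y →L[ℝ] X) (P : X →L[ℝ] Y) (hPj : ∀ v : Y, P (j v) = v)
    (hY : ∃ (W : BanachSpaceBundle) (_ : Y ≃L[ℝ] W.carrier) (w : W.carrier),
      IsDaugavetPoint w) :
    ∃ (W : BanachSpaceBundle) (_ : X ≃L[ℝ] W.carrier) (w : W.carrier),
      IsDaugavetPoint w := by
  obtain ⟨W, e, w, hw⟩ := hY
  set Zs : Submodule ℝ X := LinearMap.ker (P : X →ₗ[ℝ] Y) with hZs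
  haveI : CompleteSpace ↥Zs := P.isClosed_ker.completeSpace_coe
  have hker : ∀ x : X, x - j (P x) ∈ Zs := by
    intro x
    simp [hZs, LinearMap.mem_ker, map_sub, hPj]
  set Q : X →L[ℝ] ↥Zs :=
    (ContinuousLinearMap.id ℝ X - j.comp P).codRestrict Zs (fun x => hker x) with hQ
  set F : X →L[ℝ] Y × ↥Zs := P.prod Q with hF
  set G : (Y × ↥Zs) →L[ℝ] X :=
    j.comp (ContinuousLinearMap.fst ℝ Y ↥Zs) + Zs.subtypeL.comp (ContinuousLinearMap.snd ℝ Y ↥Zs)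
    with hG
  have h1 : Function.LeftInverse G F := by
    intro x
    simp [hF, hG, hQ, ContinuousLinearMap.coe_codRestrict_apply]
    erw [ContinuousLinearMap.coe_codRestrict_apply]
    simp
  have h2 : Function.RightInverse G F := by
    rintro ⟨y, z, hz⟩
    have hPz : P z = 0 := hz
    ext
    · simp [hF, hG, hPj, hPz]
    · simp [hF, hG, hQ, ContinuousLinearMap.coe_codRestrict_apply, hPj, hPz]
      erw [ContinuousLinearMap.coe_codRestrict_apply, ContinuousLinearMap.coe_codRestrict_apply]
      simp [hPj, hPz]
  set e1 : X ≃L[ℝ] Y × ↥Zs := ContinuousLinearEquiv.equivOfInverse F G h1 h2 with he1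
  set e2 : X ≃L[ℝ] W.carrier × ↥Zs := e1.trans (e.prodCongr (ContinuousLinearEquiv.refl ℝ ↥Zs))
  set e3 : X ≃L[ℝ] WithLp 1 (W.carrier × ↥Zs) :=
    e2.trans (WithLp.prodContinuousLinearEquiv 1 ℝ W.carrier ↥Zs).symm
  exact ⟨⟨WithLp 1 (W.carrier × ↥Zs)⟩, e3, (WithLp.equiv 1 (W.carrier × ↥Zs)).symm (w, 0),
    isDaugavetPoint_prod hw⟩
end
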